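/- arXiv:1305.5955 — 3 statements merged into one kernel-verified Lean document; each statement's English description precedes it below -/
import Mathlib

section
/- Let (G,p) be an r-dimensional tensegrity framework in ℝ^r with a proper stress ω (with proper stress matrix Ω) and let Z be a Gale matrix of (G,p). Then there exists a tensegrity framework (G,p') affinely-dominated by, but not congruent to, (G,p) if and only if there exist a non-zero y = (y_ij) ∈ ℝ^{|Ē|+|C⁰|+|S⁰|} with y_ij ≥ 0 for all {i,j} ∈ C⁰ and y_ij ≤ 0 for all {i,j} ∈ S⁰, and a vector ξ ∈ ℝ^{n−r−1}, such that ℰ⁰(y) Z = e ξ^T, where ℰ⁰(y) = Σ_{{i,j} ∈ Ē ∪ C⁰ ∪ S⁰} y_ij E^{ij}, C⁰ = {{i,j}∈C : ω_ij = 0} and S⁰ = {{i,j}∈S : ω_ij = 0}. -/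
open Matrix BigOperators

noncomputable section

/-- Squared Euclidean distance between two points of `ℝ^r`. -/
def sqDist {r : ℕ} (x y : Fin r → ℝ) : ℝ := ∑ k, (x k - y k) ^ 2

/-- `(G,q)` is dominated by `(G,p)`, where the edges of `G` are partitioned into
bars `B`, cables `C` and struts `S`. -/
def Dominates {n r s : ℕ} (B C S : Set (Fin n × Fin n))
    (p : Fin n → Fin r → ℝ) (q : Fin n → Fin s → ℝ) : Prop :=
  (∀ e ∈ B, sqDist (q e.1) (q e.2) = sqDist (p e.1) (p e.2)) ∧
  (∀ e ∈ C, sqDist (q e.1) (q e.2) ≤ sqDist (p e.1) (p e.2)) ∧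
  (∀ e ∈ S, sqDist (p e.1) (p e.2) ≤ sqDist (q e.1) (q e.2))

/-- `(G,q)` is congruent to `(G,p)`. -/
def FrameworkCongruent {n r s : ℕ} (p : Fin n → Fin r → ℝ) (q : Fin n → Fin s → ℝ) : Prop :=
  ∀ i j, sqDist (q i) (q j) = sqDist (p i) (p j)

/-- `(G,p)` is universally rigid: every framework `(G,q)` in any dimension `s`
dominated by `(G,p)` is congruent to `(G,p)`. -/
def UniversallyRigid {n r : ℕ} (B C S : Set (Fin n × Fin n))
    (p : Fin n → Fin r → ℝ) : Prop :=
  ∀ (s : ℕ) (q : Fin n → Fin s → ℝ), Dominates B C S p q → FrameworkCongruent p q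

/-- `(G,q)` is affinely-dominated by `(G,p)`: dominated and `q^i = A p^i + b`. -/
def AffinelyDominated {n r : ℕ} (B C S : Set (Fin n × Fin n))
    (p q : Fin n → Fin r → ℝ) : Prop :=
  Dominates B C S p q ∧
  ∃ (A : Matrix (Fin r) (Fin r) ℝ) (b : Fin r → ℝ), ∀ i, q i = A.mulVec (p i) + b

/-- `ω` is an equilibrium stress of the framework with edge set `E` and configuration `p`. -/
def IsStress {n r : ℕ} (E : Set (Fin n × Fin n)) (p : Fin n → Fin r → ℝ)
    (ω : Fin n → Fin n → ℝ) : Prop :=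
  (∀ i j, ω i j = ω j i) ∧ (∀ i j, (i, j) ∉ E → ω i j = 0) ∧
  (∀ i : Fin n, ∑ j, ω i j • (p i - p j) = 0)

/-- A stress is proper if `ω_ij ≥ 0` on cables and `ω_ij ≤ 0` on struts. -/
def IsProperStress {n : ℕ} (C S : Set (Fin n × Fin n)) (ω : Fin n → Fin n → ℝ) : Prop :=
  (∀ e ∈ C, 0 ≤ ω e.1 e.2) ∧ (∀ e ∈ S, ω e.1 e.2 ≤ 0)

/-- The stress matrix `Ω` associated to the stress `ω`. -/
def stressMatrix {n : ℕ} (ω : Fin n → Fin n → ℝ) : Matrix (Fin n) (Fin n) ℝ :=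
  Matrix.of fun i j => if i = j then ∑ k, ω i k else -ω i j

/-- `B`, `C`, `S` are the (symmetrically encoded) bars, cables and struts of a
simple connected tensegrity graph on `{1,…,n}`. -/
def TensegrityGraph {n : ℕ} (B C S : Set (Fin n × Fin n)) : Prop :=
  (∀ i j, (i, j) ∈ B → (j, i) ∈ B) ∧ (∀ i j, (i, j) ∈ C → (j, i) ∈ C) ∧
  (∀ i j, (i, j) ∈ S → (j, i) ∈ S) ∧ (∀ i : Fin n, (i, i) ∉ B ∪ C ∪ S) ∧
  B ∩ C = ∅ ∧ B ∩ S = ∅ ∧ C ∩ S = ∅ ∧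
  (SimpleGraph.fromRel fun i j => (i, j) ∈ B ∪ C ∪ S).Connected

/-- A set of points of `ℝ^r` is in general position if every `r+1` of them are
affinely independent. -/
def SetInGeneralPosition {r : ℕ} (A : Set (Fin r → ℝ)) : Prop :=
  ∀ T : Finset (Fin r → ℝ), ↑T ⊆ A → T.card = r + 1 →
    AffineIndependent ℝ (fun x : {x // x ∈ T} => (x : Fin r → ℝ))

/-- `Z` is a Gale matrix of the configuration with matrix `P`: its columns form a
basis of the null space of the matrix obtained by stacking `Pᵀ` on top of `eᵀ`. -/
def IsGaleMatrix {n r m : ℕ} (P : Matrix (Fin n) (Fin r) ℝ)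
    (Z : Matrix (Fin n) (Fin m) ℝ) : Prop :=
  (∀ k, Pᵀ *ᵥ (fun i => Z i k) = 0) ∧ (∀ k, ∑ i, Z i k = 0) ∧
  LinearIndependent ℝ (fun k i => Z i k) ∧
  ∀ v : Fin n → ℝ, Pᵀ *ᵥ v = 0 → ∑ i, v i = 0 →
    v ∈ Submodule.span ℝ (Set.range fun k i => Z i k)

/-- `Ω` is a stress matrix of the framework with edge set `E` and configuration
matrix `P` (with centroid at the origin): it is symmetric, vanishes on missing
edges, and satisfies `Pᵀ Ω = 0` and `Ω e = 0`. -/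
def IsStressMatrix {n r : ℕ} (E : Set (Fin n × Fin n)) (P : Matrix (Fin n) (Fin r) ℝ)
    (Ω : Matrix (Fin n) (Fin n) ℝ) : Prop :=
  Ω.IsSymm ∧ (∀ i j, i ≠ j → (i, j) ∉ E → Ω i j = 0) ∧
  Pᵀ * Ω = 0 ∧ Ω *ᵥ (fun _ => (1 : ℝ)) = 0

/-- The matrix `F^{ij} = (e^i - e^j)(e^i - e^j)ᵀ`. -/
def Fmat {n : ℕ} (i j : Fin n) : Matrix (Fin n) (Fin n) ℝ :=
  Matrix.vecMulVec (Pi.single i 1 - Pi.single j 1) (Pi.single i 1 - Pi.single j 1)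

/-- The matrix `E^{ij} = e^i (e^j)ᵀ + e^j (e^i)ᵀ`. -/
def Emat {n : ℕ} (i j : Fin n) : Matrix (Fin n) (Fin n) ℝ :=
  Matrix.vecMulVec (Pi.single i 1) (Pi.single j 1) +
    Matrix.vecMulVec (Pi.single j 1) (Pi.single i 1)

/-- The matrix `L^i = e^i eᵀ + e (e^i)ᵀ`. -/
def Lmat {n : ℕ} (i : Fin n) : Matrix (Fin n) (Fin n) ℝ :=
  Matrix.vecMulVec (Pi.single i 1) (fun _ => 1) +
    Matrix.vecMulVec (fun _ => 1) (Pi.single i 1)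

/-- `ℰ(y) = Σ y_ij E^{ij}` (for `y` supported on the relevant pairs `i < j`). -/
def EscrY {n : ℕ} (y : Fin n → Fin n → ℝ) : Matrix (Fin n) (Fin n) ℝ :=
  ∑ i, ∑ j, y i j • Emat i j

/-- The vector `x = -(1/n) ℰ(y) e + (1/(2n²)) (eᵀ ℰ(y) e) e`. -/
def xvec {n : ℕ} (y : Fin n → Fin n → ℝ) : Fin n → ℝ :=
  (-(1 / (n : ℝ))) • (EscrY y *ᵥ fun _ => (1 : ℝ)) +
    ((1 / (2 * (n : ℝ) ^ 2)) * ((fun _ => (1 : ℝ)) ⬝ᵥ (EscrY y *ᵥ fun _ => (1 : ℝ)))) •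
      (fun _ : Fin n => (1 : ℝ))

lemma sqDist_eq_dot {r : ℕ} (x y : Fin r → ℝ) : sqDist x y = (x - y) ⬝ᵥ (x - y) := by
  simp [sqDist, dotProduct, pow_two]

lemma tdot {m k : ℕ} (A : Matrix (Fin m) (Fin k) ℝ) (x : Fin m → ℝ) (u : Fin k → ℝ) :
    (Aᵀ *ᵥ x) ⬝ᵥ u = x ⬝ᵥ (A *ᵥ u) := by
  rw [← Matrix.vecMul_transpose, Matrix.transpose_transpose, ← Matrix.dotProduct_mulVec]

lemma EscrY_apply {n : ℕ} (y : Fin n → Fin n → ℝ) (a b : Fin n) :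
    EscrY y a b = y a b + y b a := by
  simp only [EscrY, Matrix.sum_apply, Matrix.smul_apply, Emat, Matrix.add_apply,
    Matrix.vecMulVec_apply, Pi.single_apply, smul_eq_mul]
  simp [mul_add, Finset.sum_add_distrib, mul_ite, ite_mul, Finset.sum_ite_eq, Finset.sum_ite_eq']

lemma sqDist_affine {r : ℕ} (A : Matrix (Fin r) (Fin r) ℝ) (b : Fin r → ℝ) (u v : Fin r → ℝ) :
    sqDist (A *ᵥ u + b) (A *ᵥ v + b) = sqDist u v + (u - v) ⬝ᵥ ((Aᵀ * A - 1) *ᵥ (u - v)) := by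
  have h : (A *ᵥ u + b) - (A *ᵥ v + b) = A *ᵥ (u - v) := by
    rw [Matrix.mulVec_sub]; abel
  have key : (u - v) ⬝ᵥ ((Aᵀ * A) *ᵥ (u - v)) = (A *ᵥ (u - v)) ⬝ᵥ (A *ᵥ (u - v)) := by
    rw [← Matrix.mulVec_mulVec, dotProduct_comm, tdot]
  rw [sqDist_eq_dot, sqDist_eq_dot, h, ← key, Matrix.sub_mulVec, dotProduct_sub,
    Matrix.one_mulVec]
  simp only [dotProduct_add, dotProduct_neg, dotProduct_sub]
  ring

lemma helper2 {n r : ℕ} (p : Fin n → Fin r → ℝ) (z : Fin n → ℝ)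
    (hz : ∀ m, ∑ b, p b m * z b = 0) (w : Fin r → ℝ) :
    ∑ b, (p b ⬝ᵥ w) * z b = 0 := by
  simp only [dotProduct, Finset.sum_mul]
  rw [Finset.sum_comm]
  have : ∀ l : Fin r, ∑ b, p b l * w l * z b = 0 := by
    intro l
    have h : ∑ b, p b l * w l * z b = (∑ b, p b l * z b) * w l := by
      rw [Finset.sum_mul]; congr 1; ext b; ring
    rw [h, hz, zero_mul]
  simp [this]


lemma forward_dir {n r : ℕ} (B C S : Set (Fin n × Fin n))
    (p : Fin n → Fin r → ℝ) (ω : Fin n → Fin n → ℝ)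
    (hωsym : ∀ i j, ω i j = ω j i)
    (hω0 : ∀ i j, (i, j) ∉ B ∪ C ∪ S → ω i j = 0)
    (heq : ∀ i : Fin n, ∑ j, ω i j • (p i - p j) = 0)
    (hpC : ∀ e ∈ C, 0 ≤ ω e.1 e.2) (hpS : ∀ e ∈ S, ω e.1 e.2 ≤ 0)
    (Z : Matrix (Fin n) (Fin (n - r - 1)) ℝ)
    (hZ1 : ∀ k, (Matrix.of p)ᵀ *ᵥ (fun i => Z i k) = 0)
    (hZ2 : ∀ k, ∑ i, Z i k = 0)
    (p' : Fin n → Fin r → ℝ)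
    (hdom : Dominates B C S p p')
    (haff : ∃ (A : Matrix (Fin r) (Fin r) ℝ) (b : Fin r → ℝ), ∀ i, p' i = A.mulVec (p i) + b)
    (hnc : ¬ FrameworkCongruent p p') :
    ∃ y : Fin n → Fin n → ℝ, y ≠ 0 ∧
        (∀ i j, y i j ≠ 0 → i < j ∧ ((i, j) ∉ B ∪ C ∪ S ∨
          ((i, j) ∈ C ∧ ω i j = 0) ∨ ((i, j) ∈ S ∧ ω i j = 0))) ∧
        (∀ i j, (i, j) ∈ C → ω i j = 0 → 0 ≤ y i j) ∧
        (∀ i j, (i, j) ∈ S → ω i j = 0 → y i j ≤ 0) ∧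
        ∃ ξ : Fin (n - r - 1) → ℝ,
          EscrY y * Z = Matrix.vecMulVec (fun _ => 1) ξ := by
  classical
  obtain ⟨hbar, hcab, hstr⟩ := hdom
  obtain ⟨A, b, hq⟩ := haff
  set Ψ : Matrix (Fin r) (Fin r) ℝ := Aᵀ * A - 1 with hΨdef
  set qf : Fin n → Fin n → ℝ := fun i j => (p i - p j) ⬝ᵥ (Ψ *ᵥ (p i - p j)) with hqfdef
  have hdist : ∀ i j, sqDist (p' i) (p' j) = sqDist (p i) (p j) + qf i j := fun i j => by
    rw [hq i, hq j, sqDist_affine]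
  have hqfsymm : ∀ i j, qf i j = qf j i := by
    intro i j
    have h : p i - p j = -(p j - p i) := (neg_sub _ _).symm
    simp only [hqfdef, h, Matrix.mulVec_neg, dotProduct_neg, neg_dotProduct,
      neg_neg]
  have hinner : ∀ (i : Fin n) (v : Fin r → ℝ), ∑ j, ω i j * ((p i - p j) ⬝ᵥ v) = 0 := by
    intro i v
    simp only [dotProduct, Pi.sub_apply, Finset.mul_sum]
    rw [Finset.sum_comm]
    refine Finset.sum_eq_zero fun m _ => ?_
    have h := congrFun (heq i) m
    simp only [Finset.sum_apply, Pi.smul_apply, Pi.sub_apply, smul_eq_mul, Pi.zero_apply] at h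
    have h2 : ∑ j, ω i j * ((p i m - p j m) * v m) = (∑ j, ω i j * (p i m - p j m)) * v m := by
      rw [Finset.sum_mul]; exact Finset.sum_congr rfl fun j _ => (mul_assoc _ _ _).symm
    rw [h2, h, zero_mul]
  have hsum0 : ∑ i, ∑ j, ω i j * qf i j = 0 := by
    have expand : ∀ i j, ω i j * qf i j =
        ω i j * ((p i - p j) ⬝ᵥ (Ψ *ᵥ p i)) - ω i j * ((p i - p j) ⬝ᵥ (Ψ *ᵥ p j)) := by
      intro i j
      have : qf i j = (p i - p j) ⬝ᵥ (Ψ *ᵥ p i) - (p i - p j) ⬝ᵥ (Ψ *ᵥ p j) := by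
        rw [hqfdef]; dsimp only; rw [Matrix.mulVec_sub, dotProduct_sub]
      rw [this]; ring
    have h1 : ∀ i : Fin n, ∑ j, ω i j * ((p i - p j) ⬝ᵥ (Ψ *ᵥ p i)) = 0 := fun i =>
      hinner i (Ψ *ᵥ p i)
    have h2 : ∑ i, ∑ j, ω i j * ((p i - p j) ⬝ᵥ (Ψ *ᵥ p j)) = 0 := by
      rw [Finset.sum_comm]
      refine Finset.sum_eq_zero fun j _ => ?_
      have h3 : ∀ i, ω i j * ((p i - p j) ⬝ᵥ (Ψ *ᵥ p j)) =
          -(ω j i * ((p j - p i) ⬝ᵥ (Ψ *ᵥ p j))) := by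
        intro i
        rw [hωsym i j, show p i - p j = -(p j - p i) from (neg_sub _ _).symm,
          neg_dotProduct]
        ring
      simp only [h3, Finset.sum_neg_distrib, hinner j (Ψ *ᵥ p j), neg_zero]
    have hsplit : ∑ i, ∑ j, ω i j * qf i j =
        (∑ i, ∑ j, ω i j * ((p i - p j) ⬝ᵥ (Ψ *ᵥ p i)))
          - ∑ i, ∑ j, ω i j * ((p i - p j) ⬝ᵥ (Ψ *ᵥ p j)) := by
      rw [← Finset.sum_sub_distrib]
      refine Finset.sum_congr rfl fun i _ => ?_
      rw [← Finset.sum_sub_distrib]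
      exact Finset.sum_congr rfl fun j _ => expand i j
    rw [hsplit, h2, sub_zero]
    exact Finset.sum_eq_zero fun i _ => h1 i
  have hterm : ∀ i j, ω i j * qf i j ≤ 0 := by
    intro i j
    by_cases hB : (i, j) ∈ B
    · have hq0 : qf i j = 0 := by
        have h1 := hbar (i, j) hB; have h2 := hdist i j; dsimp only at h1; linarith
      rw [hq0, mul_zero]
    · by_cases hC : (i, j) ∈ C
      · refine mul_nonpos_of_nonneg_of_nonpos (hpC (i, j) hC) ?_
        have h1 := hcab (i, j) hC; have h2 := hdist i j; dsimp only at h1; linarith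
      · by_cases hS : (i, j) ∈ S
        · refine mul_nonpos_of_nonpos_of_nonneg (hpS (i, j) hS) ?_
          have h1 := hstr (i, j) hS; have h2 := hdist i j; dsimp only at h1; linarith
        · rw [hω0 i j (by simp [Set.mem_union, hB, hC, hS]), zero_mul]
  have hzero : ∀ i j, ω i j * qf i j = 0 := by
    have hs : ∑ x : Fin n × Fin n, ω x.1 x.2 * qf x.1 x.2 = 0 := by
      rw [Fintype.sum_prod_type]; exact hsum0
    intro i j
    exact (Finset.sum_eq_zero_iff_of_nonpos (fun x _ => hterm x.1 x.2)).mp hs (i, j)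
      (Finset.mem_univ _)
  set y : Fin n → Fin n → ℝ := fun i j =>
    if i < j ∧ ((i, j) ∉ B ∪ C ∪ S ∨ ((i, j) ∈ C ∧ ω i j = 0) ∨ ((i, j) ∈ S ∧ ω i j = 0))
    then -(qf i j)/2 else 0 with hydef
  have hqf_notgood : ∀ i j,
      ¬((i, j) ∉ B ∪ C ∪ S ∨ ((i, j) ∈ C ∧ ω i j = 0) ∨ ((i, j) ∈ S ∧ ω i j = 0)) →
      qf i j = 0 := by
    intro i j hng
    have hmem : (i, j) ∈ B ∪ C ∪ S := by
      by_contra h; exact hng (Or.inl h)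
    rcases hmem with (hB | hC) | hS
    · have h1 := hbar (i, j) hB; have h2 := hdist i j; dsimp only at h1; linarith
    · have hω : ω i j ≠ 0 := fun h => hng (Or.inr (Or.inl ⟨hC, h⟩))
      rcases mul_eq_zero.mp (hzero i j) with h | h
      · exact absurd h hω
      · exact h
    · have hω : ω i j ≠ 0 := fun h => hng (Or.inr (Or.inr ⟨hS, h⟩))
      rcases mul_eq_zero.mp (hzero i j) with h | h
      · exact absurd h hω
      · exact h
  have hkey : ∀ a b, y a b + y b a = -(qf a b)/2 := by
    intro a b
    rcases lt_trichotomy a b with hab | hab | hab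
    · have hba : y b a = 0 := by
        rw [hydef]; exact if_neg fun h => absurd h.1 (lt_asymm hab)
      rw [hba, add_zero, hydef]
      by_cases hg : (a, b) ∉ B ∪ C ∪ S ∨ ((a, b) ∈ C ∧ ω a b = 0) ∨ ((a, b) ∈ S ∧ ω a b = 0)
      · exact if_pos ⟨hab, hg⟩
      · have hng : ¬(a < b ∧ ((a, b) ∉ B ∪ C ∪ S ∨ ((a, b) ∈ C ∧ ω a b = 0) ∨
            ((a, b) ∈ S ∧ ω a b = 0))) := fun h => hg h.2
        dsimp only
        rw [if_neg hng, hqf_notgood a b hg]; norm_num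
    · subst hab
      have h0 : qf a a = 0 := by rw [hqfdef]; simp
      have hy0 : y a a = 0 := by
        rw [hydef]; exact if_neg fun h => absurd h.1 (lt_irrefl a)
      rw [h0, hy0]; norm_num
    · have hab' : y a b = 0 := by
        rw [hydef]; exact if_neg fun h => absurd h.1 (lt_asymm hab)
      rw [hab', zero_add, hqfsymm a b, hydef]
      by_cases hg : (b, a) ∉ B ∪ C ∪ S ∨ ((b, a) ∈ C ∧ ω b a = 0) ∨ ((b, a) ∈ S ∧ ω b a = 0)
      · exact if_pos ⟨hab, hg⟩
      · have hng : ¬(b < a ∧ ((b, a) ∉ B ∪ C ∪ S ∨ ((b, a) ∈ C ∧ ω b a = 0) ∨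
            ((b, a) ∈ S ∧ ω b a = 0))) := fun h => hg h.2
        dsimp only
        rw [if_neg hng, hqf_notgood b a hg]; norm_num
  refine ⟨y, ?_, ?_, ?_, ?_, ?_⟩
  · intro h0
    apply hnc
    intro i j
    have hk := hkey i j
    rw [h0] at hk
    simp only [Pi.zero_apply, add_zero] at hk
    have : qf i j = 0 := by linarith [hk]
    rw [hdist i j, this, add_zero]
  · intro i j hy
    rw [hydef] at hy
    by_cases h : i < j ∧ ((i, j) ∉ B ∪ C ∪ S ∨ ((i, j) ∈ C ∧ ω i j = 0) ∨
        ((i, j) ∈ S ∧ ω i j = 0))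
    · exact h
    · exact absurd (if_neg h) hy
  · intro i j hC hω
    rw [hydef]
    dsimp only
    split_ifs with h
    · have h1 := hcab (i, j) hC; have h2 := hdist i j; dsimp only at h1
      have : qf i j ≤ 0 := by linarith
      linarith
    · exact le_refl 0
  · intro i j hS hω
    rw [hydef]
    dsimp only
    split_ifs with h
    · have h1 := hstr (i, j) hS; have h2 := hdist i j; dsimp only at h1
      have : 0 ≤ qf i j := by linarith
      linarith
    · exact le_refl 0
  · refine ⟨fun k => -(1/2) * ∑ c, (p c ⬝ᵥ (Ψ *ᵥ p c)) * Z c k, ?_⟩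
    ext a k
    rw [Matrix.mul_apply, Matrix.vecMulVec_apply]
    have h1 : ∀ b, EscrY y a b = -(qf a b)/2 := fun b => by rw [EscrY_apply, hkey]
    have hz : ∀ m, ∑ b, p b m * Z b k = 0 := by
      intro m
      have h := congrFun (hZ1 k) m
      simpa [Matrix.mulVec, dotProduct, Matrix.transpose_apply] using h
    have hqf_expand : ∀ c, qf a c = (p a ⬝ᵥ (Ψ *ᵥ p a)) - (p a ⬝ᵥ (Ψ *ᵥ p c))
        - (p c ⬝ᵥ (Ψ *ᵥ p a)) + (p c ⬝ᵥ (Ψ *ᵥ p c)) := by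
      intro c
      rw [hqfdef]
      dsimp only
      rw [Matrix.mulVec_sub, dotProduct_sub, sub_dotProduct,
        sub_dotProduct]
      ring
    have hS2 : ∑ c, (p a ⬝ᵥ (Ψ *ᵥ p c)) * Z c k = 0 := by
      have hc : ∀ c, p a ⬝ᵥ (Ψ *ᵥ p c) = p c ⬝ᵥ (Ψᵀ *ᵥ p a) := by
        intro c
        rw [← tdot, dotProduct_comm]
      simp only [hc]
      exact helper2 p (fun c => Z c k) hz (Ψᵀ *ᵥ p a)
    have hS3 : ∑ c, (p c ⬝ᵥ (Ψ *ᵥ p a)) * Z c k = 0 :=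
      helper2 p (fun c => Z c k) hz (Ψ *ᵥ p a)
    calc ∑ c, EscrY y a c * Z c k
        = ∑ c, ((p a ⬝ᵥ (Ψ *ᵥ p a)) * Z c k - (p a ⬝ᵥ (Ψ *ᵥ p c)) * Z c k
            - (p c ⬝ᵥ (Ψ *ᵥ p a)) * Z c k + (p c ⬝ᵥ (Ψ *ᵥ p c)) * Z c k) * (-(1/2)) := by
          refine Finset.sum_congr rfl fun c _ => ?_
          rw [h1 c, hqf_expand c]; ring
      _ = (∑ c, ((p a ⬝ᵥ (Ψ *ᵥ p a)) * Z c k - (p a ⬝ᵥ (Ψ *ᵥ p c)) * Z c k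
            - (p c ⬝ᵥ (Ψ *ᵥ p a)) * Z c k + (p c ⬝ᵥ (Ψ *ᵥ p c)) * Z c k)) * (-(1/2)) := by
          rw [Finset.sum_mul]
      _ = 1 * (-(1/2) * ∑ c, (p c ⬝ᵥ (Ψ *ᵥ p c)) * Z c k) := by
          simp only [Finset.sum_add_distrib, Finset.sum_sub_distrib, ← Finset.mul_sum,
            hZ2 k, hS2, hS3, mul_zero, sub_zero, zero_sub, zero_add]
          ring

open scoped MatrixOrder in
set_option maxHeartbeats 2000000 in
lemma backward_dir {n r : ℕ} (hn : 0 < n) (B C S : Set (Fin n × Fin n))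
    (hBsym : ∀ i j, (i, j) ∈ B → (j, i) ∈ B)
    (hCsym : ∀ i j, (i, j) ∈ C → (j, i) ∈ C)
    (hSsym : ∀ i j, (i, j) ∈ S → (j, i) ∈ S)
    (hBC : B ∩ C = ∅) (hBS : B ∩ S = ∅) (hCS : C ∩ S = ∅)
    (p : Fin n → Fin r → ℝ)
    (hdim : affineSpan ℝ (Set.range p) = ⊤)
    (hcentroid : ∀ k, ∑ i, p i k = 0)
    (ω : Fin n → Fin n → ℝ)
    (Z : Matrix (Fin n) (Fin (n - r - 1)) ℝ)
    (hZ1 : ∀ k, (Matrix.of p)ᵀ *ᵥ (fun i => Z i k) = 0)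
    (hZ2 : ∀ k, ∑ i, Z i k = 0)
    (hZ4 : ∀ v : Fin n → ℝ, (Matrix.of p)ᵀ *ᵥ v = 0 → ∑ i, v i = 0 →
      v ∈ Submodule.span ℝ (Set.range fun k i => Z i k))
    (y : Fin n → Fin n → ℝ) (hy0 : y ≠ 0)
    (hsupp : ∀ i j, y i j ≠ 0 → i < j ∧ ((i, j) ∉ B ∪ C ∪ S ∨
      ((i, j) ∈ C ∧ ω i j = 0) ∨ ((i, j) ∈ S ∧ ω i j = 0)))
    (hyC : ∀ i j, (i, j) ∈ C → ω i j = 0 → 0 ≤ y i j)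
    (hyS : ∀ i j, (i, j) ∈ S → ω i j = 0 → y i j ≤ 0)
    (ξ : Fin (n - r - 1) → ℝ)
    (hξ : EscrY y * Z = Matrix.vecMulVec (fun _ => 1) ξ) :
    ∃ p' : Fin n → Fin r → ℝ, AffinelyDominated B C S p p' ∧ ¬ FrameworkCongruent p p' := by
  classical
  have hnR : (n : ℝ) ≠ 0 := Nat.cast_ne_zero.mpr hn.ne'
  have hydiag : ∀ a, y a a = 0 := by
    intro a; by_contra h; exact absurd (hsupp a a h).1 (lt_irrefl a)
  -- the configuration spans ℝ^r
  have hspan : Submodule.span ℝ (Set.range p) = ⊤ := by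
    have h1 : vectorSpan ℝ (Set.range p) = ⊤ := by
      rw [← direction_affineSpan, hdim]; exact AffineSubspace.direction_top ℝ _ _
    rw [eq_top_iff, ← h1, vectorSpan_def]
    refine Submodule.span_le.mpr ?_
    rintro v ⟨u, hu, w, hw, rfl⟩
    exact Submodule.sub_mem _ (Submodule.subset_span hu) (Submodule.subset_span hw)
  have hPker : ∀ w : Fin r → ℝ, (∀ i, p i ⬝ᵥ w = 0) → w = 0 := by
    intro w hw
    have hall : ∀ v, v ∈ Submodule.span ℝ (Set.range p) → v ⬝ᵥ w = 0 := by
      intro v hv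
      induction hv using Submodule.span_induction with
      | mem x hx => obtain ⟨i, rfl⟩ := hx; exact hw i
      | zero => simp
      | add x1 x2 _ _ hx1 hx2 => rw [add_dotProduct, hx1, hx2, add_zero]
      | smul c x1 _ hx1 => rw [smul_dotProduct, hx1, smul_zero]
    have h0 := hall w (by rw [hspan]; trivial)
    exact dotProduct_self_eq_zero.mp h0
  set P : Matrix (Fin n) (Fin r) ℝ := Matrix.of p with hPdef
  set G : Matrix (Fin r) (Fin r) ℝ := Pᵀ * P with hGdef
  have hGunit : IsUnit G.det := by
    by_contra h
    have hdet : G.det = 0 := by rwa [isUnit_iff_ne_zero, not_not] at h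
    obtain ⟨v, hv0, hGv⟩ := Matrix.exists_mulVec_eq_zero_iff.mpr hdet
    apply hv0
    apply hPker v
    have h2 : (P *ᵥ v) ⬝ᵥ (P *ᵥ v) = 0 := by
      have heq : (P *ᵥ v) ⬝ᵥ (P *ᵥ v) = v ⬝ᵥ (G *ᵥ v) := by
        calc (P *ᵥ v) ⬝ᵥ (P *ᵥ v) = (Pᵀ *ᵥ (P *ᵥ v)) ⬝ᵥ v := (tdot P (P *ᵥ v) v).symm
          _ = v ⬝ᵥ (Pᵀ *ᵥ (P *ᵥ v)) := dotProduct_comm _ _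
          _ = v ⬝ᵥ (G *ᵥ v) := by rw [Matrix.mulVec_mulVec]
      rw [heq, hGv, dotProduct_zero]
    have h3 := dotProduct_self_eq_zero.mp h2
    intro i
    exact congrFun h3 i
  have hGG : G⁻¹ * G = 1 := Matrix.nonsing_inv_mul G hGunit
  have hGG' : G * G⁻¹ = 1 := Matrix.mul_nonsing_inv G hGunit
  have hGsym : Gᵀ = G := by rw [hGdef, Matrix.transpose_mul, Matrix.transpose_transpose]
  have hGinvsym : (G⁻¹)ᵀ = G⁻¹ := by rw [Matrix.transpose_nonsing_inv, hGsym]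
  -- the matrix M
  have hEapp : ∀ a b, EscrY y a b = y a b + y b a := EscrY_apply y
  set u : Fin n → ℝ := fun a => ∑ b, EscrY y a b with hudef
  set σ : ℝ := ∑ a, u a with hσdef
  have hMul1 : ∀ a, (EscrY y *ᵥ fun _ => (1 : ℝ)) a = u a := by
    intro a; simp [Matrix.mulVec, dotProduct, hudef]
  have hdot1 : ((fun _ => (1 : ℝ)) ⬝ᵥ (EscrY y *ᵥ fun _ => (1 : ℝ))) = σ := by
    simp only [dotProduct, hMul1, one_mul, hσdef]
  have hxval : ∀ a, xvec y a = -(1 / (n : ℝ)) * u a + 1 / (2 * (n : ℝ) ^ 2) * σ := by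
    intro a
    simp only [xvec, Pi.add_apply, Pi.smul_apply, smul_eq_mul, hMul1, hdot1, mul_one]
  set M : Matrix (Fin n) (Fin n) ℝ :=
    Matrix.of fun a b => EscrY y a b + xvec y a + xvec y b with hMdef
  have hMapp : ∀ a b, M a b = EscrY y a b + xvec y a + xvec y b := fun a b => rfl
  have hMsym : Mᵀ = M := by
    ext a b
    rw [Matrix.transpose_apply, hMapp, hMapp, hEapp, hEapp]
    ring
  have hsx : ∑ b, xvec y b = -(1 / (2 * (n : ℝ))) * σ := by
    have : ∑ b, xvec y b = ∑ b, (-(1 / (n : ℝ)) * u b + 1 / (2 * (n : ℝ) ^ 2) * σ) :=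
      Finset.sum_congr rfl fun b _ => hxval b
    rw [this, Finset.sum_add_distrib, ← Finset.mul_sum, Finset.sum_const, Finset.card_univ,
      Fintype.card_fin, nsmul_eq_mul, ← hσdef]
    field_simp
    ring
  have hMrow : ∀ a, ∑ b, M a b = 0 := by
    intro a
    have e1 : ∑ b, M a b = ∑ b, (EscrY y a b + xvec y a + xvec y b) :=
      Finset.sum_congr rfl fun b _ => hMapp a b
    rw [e1, Finset.sum_add_distrib, Finset.sum_add_distrib, Finset.sum_const,
      Finset.card_univ, Fintype.card_fin, nsmul_eq_mul, hsx]
    have hua : (∑ b, EscrY y a b) = u a := rfl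
    rw [hua, hxval a]
    field_simp
    ring
  have hEZ : ∀ a k, ∑ b, EscrY y a b * Z b k = ξ k := by
    intro a k
    have h := congrFun (congrFun hξ a) k
    rw [Matrix.mul_apply, Matrix.vecMulVec_apply, one_mul] at h
    exact h
  have hMZ : ∀ a k, ∑ b, M a b * Z b k = 0 := by
    intro a k
    have hsum : ∑ b, u b * Z b k = (n : ℝ) * ξ k := by
      calc ∑ b, u b * Z b k = ∑ b, ∑ c, EscrY y b c * Z b k := by
            refine Finset.sum_congr rfl fun b _ => ?_
            rw [show u b = ∑ c, EscrY y b c from rfl, Finset.sum_mul]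
        _ = ∑ c, ∑ b, EscrY y b c * Z b k := Finset.sum_comm
        _ = ∑ c, ∑ b, EscrY y c b * Z b k := by
            refine Finset.sum_congr rfl fun c _ => Finset.sum_congr rfl fun b _ => ?_
            rw [hEapp, hEapp]; ring
        _ = ∑ _c : Fin n, ξ k := Finset.sum_congr rfl fun c _ => hEZ c k
        _ = (n : ℝ) * ξ k := by
            rw [Finset.sum_const, Finset.card_univ, Fintype.card_fin, nsmul_eq_mul]
    have hxz : ∑ b, xvec y b * Z b k = -ξ k := by
      have e1 : ∑ b, xvec y b * Z b k =
          ∑ b, (-(1 / (n : ℝ)) * (u b * Z b k) + 1 / (2 * (n : ℝ) ^ 2) * σ * Z b k) := by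
        refine Finset.sum_congr rfl fun b _ => ?_
        rw [hxval b]; ring
      rw [e1, Finset.sum_add_distrib, ← Finset.mul_sum, ← Finset.mul_sum, hsum, hZ2 k,
        mul_zero, add_zero]
      field_simp
    have e2 : ∑ b, M a b * Z b k =
        ∑ b, (EscrY y a b * Z b k + xvec y a * Z b k + xvec y b * Z b k) := by
      refine Finset.sum_congr rfl fun b _ => ?_
      rw [hMapp]; ring
    rw [e2, Finset.sum_add_distrib, Finset.sum_add_distrib, ← Finset.mul_sum, hEZ a k,
      hZ2 k, mul_zero, add_zero, hxz]
    ring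
  -- every suitable vector is in the column space of P
  have hcol : ∀ c : Fin n → ℝ, (∑ i, c i = 0) → (∀ k, ∑ i, c i * Z i k = 0) →
      ∃ w : Fin r → ℝ, c = P *ᵥ w := by
    intro c hc1 hc2
    set w : Fin r → ℝ := G⁻¹ *ᵥ (Pᵀ *ᵥ c) with hwdef
    set c' : Fin n → ℝ := c - P *ᵥ w with hc'def
    have hPc' : Pᵀ *ᵥ c' = 0 := by
      rw [hc'def, Matrix.mulVec_sub]
      have hkey : Pᵀ *ᵥ (P *ᵥ w) = Pᵀ *ᵥ c := by
        rw [hwdef]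
        simp only [Matrix.mulVec_mulVec]
        have hPP : Pᵀ * (P * (G⁻¹ * Pᵀ)) = Pᵀ := by
          rw [← Matrix.mul_assoc, ← hGdef, ← Matrix.mul_assoc, hGG', Matrix.one_mul]
        rw [← Matrix.mul_assoc, ← Matrix.mul_assoc, ← hGdef, hGG', Matrix.one_mul]
      rw [hkey, sub_self]
    have hsumc' : ∑ i, c' i = 0 := by
      have hPw : ∑ i, (P *ᵥ w) i = 0 := by
        simp only [Matrix.mulVec, dotProduct]
        rw [Finset.sum_comm]
        refine Finset.sum_eq_zero fun k _ => ?_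
        have hPp : ∑ i, P i k * w k = (∑ i, p i k) * w k := by
          rw [Finset.sum_mul]; rfl
        rw [hPp, hcentroid k, zero_mul]
      simp only [hc'def, Pi.sub_apply, Finset.sum_sub_distrib, hPw, sub_zero, hc1]
    have hmem := hZ4 c' hPc' hsumc'
    have hdotz : ∀ v, v ∈ Submodule.span ℝ (Set.range fun k i => Z i k) → v ⬝ᵥ c' = 0 := by
      intro v hv
      induction hv using Submodule.span_induction with
      | mem xx hxx =>
          obtain ⟨k, rfl⟩ := hxx
          have hz1 : (fun i => Z i k) ⬝ᵥ c = 0 := by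
            have := hc2 k
            simpa [dotProduct, mul_comm] using this
          have hz2 : (fun i => Z i k) ⬝ᵥ (P *ᵥ w) = 0 := by
            rw [← tdot P (fun i => Z i k) w, hZ1 k, zero_dotProduct]
          rw [hc'def, dotProduct_sub, hz1, hz2, sub_zero]
      | zero => simp
      | add x1 x2 _ _ hx1 hx2 => rw [add_dotProduct, hx1, hx2, add_zero]
      | smul a x1 _ hx1 => rw [smul_dotProduct, hx1, smul_zero]
    have hcc : c' ⬝ᵥ c' = 0 := hdotz c' hmem
    have hc'0 : c' = 0 := dotProduct_self_eq_zero.mp hcc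
    exact ⟨w, sub_eq_zero.mp (hc'def ▸ hc'0)⟩
  -- write each row of M in the column space of P
  have hrows : ∀ a, ∃ wa : Fin r → ℝ, (fun b => M a b) = P *ᵥ wa := by
    intro a
    exact hcol (fun b => M a b) (hMrow a) (fun k => hMZ a k)
  choose N hN using hrows
  set Nmat : Matrix (Fin n) (Fin r) ℝ := Matrix.of N with hNmatdef
  have hMfact : M = Nmat * Pᵀ := by
    ext a b
    rw [Matrix.mul_apply]
    have h := congrFun (hN a) b
    rw [h]
    simp only [Matrix.mulVec, dotProduct, Matrix.transpose_apply]
    exact Finset.sum_congr rfl fun x _ => mul_comm _ _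
  have hMfact2 : M = P * Nmatᵀ := by
    calc M = Mᵀ := hMsym.symm
      _ = (Nmat * Pᵀ)ᵀ := by rw [← hMfact]
      _ = P * Nmatᵀ := by rw [Matrix.transpose_mul, Matrix.transpose_transpose]
  set Ψ : Matrix (Fin r) (Fin r) ℝ := G⁻¹ * (Pᵀ * M * P) * G⁻¹ with hΨdef
  have hΨsym : Ψᵀ = Ψ := by
    rw [hΨdef]
    simp only [Matrix.transpose_mul, Matrix.transpose_transpose, hGinvsym, hMsym,
      Matrix.mul_assoc]
  have hPΨP : P * Ψ * Pᵀ = M := by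
    rw [hΨdef]
    have h1 : P * G⁻¹ * Pᵀ * M = M := by
      conv_lhs => rw [hMfact2]
      calc P * G⁻¹ * Pᵀ * (P * Nmatᵀ) = P * G⁻¹ * (Pᵀ * P) * Nmatᵀ := by
            simp only [Matrix.mul_assoc]
        _ = P * (G⁻¹ * G) * Nmatᵀ := by rw [← hGdef]; simp only [Matrix.mul_assoc]
        _ = P * Nmatᵀ := by rw [hGG, Matrix.mul_one]
        _ = M := hMfact2.symm
    have h2 : M * (P * G⁻¹ * Pᵀ) = M := by
      conv_lhs => rw [hMfact]
      calc Nmat * Pᵀ * (P * G⁻¹ * Pᵀ) = Nmat * ((Pᵀ * P) * G⁻¹) * Pᵀ := by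
            simp only [Matrix.mul_assoc]
        _ = Nmat * (G * G⁻¹) * Pᵀ := by rw [← hGdef]
        _ = Nmat * Pᵀ := by rw [hGG', Matrix.mul_one]
        _ = M := hMfact.symm
    calc P * (G⁻¹ * (Pᵀ * M * P) * G⁻¹) * Pᵀ
        = (P * G⁻¹ * Pᵀ * M) * (P * G⁻¹ * Pᵀ) := by simp only [Matrix.mul_assoc]
      _ = M * (P * G⁻¹ * Pᵀ) := by rw [h1]
      _ = M := h2
  -- the quadratic form of Ψ on edge vectors
  have hquad : ∀ i j, (p i - p j) ⬝ᵥ (Ψ *ᵥ (p i - p j)) = -2 * (y i j + y j i) := by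
    intro i j
    set δ : Fin n → ℝ := Pi.single i 1 - Pi.single j 1 with hδdef
    have hPδ : Pᵀ *ᵥ δ = p i - p j := by
      ext m
      simp [Matrix.mulVec, dotProduct, hδdef, Pi.sub_apply, Pi.single_apply,
        Matrix.transpose_apply, mul_sub, sub_mul, Finset.sum_sub_distrib, mul_ite, mul_one,
        mul_zero, Finset.sum_ite_eq, Finset.sum_ite_eq', Matrix.of_apply, hPdef]
    have h1 : (p i - p j) ⬝ᵥ (Ψ *ᵥ (p i - p j)) = δ ⬝ᵥ (M *ᵥ δ) := by
      rw [← hPδ, tdot]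
      rw [Matrix.mulVec_mulVec, Matrix.mulVec_mulVec, hPΨP]
    rw [h1]
    have hMδ : ∀ a, (M *ᵥ δ) a = M a i - M a j := by
      intro a
      simp only [Matrix.mulVec, dotProduct, hδdef, Pi.sub_apply, Pi.single_apply]
      simp [mul_sub, Finset.sum_sub_distrib, mul_ite, mul_one, mul_zero, Finset.sum_ite_eq']
    have h2 : δ ⬝ᵥ (M *ᵥ δ) = M i i - M i j - (M j i - M j j) := by
      simp only [dotProduct, hMδ, hδdef, Pi.sub_apply, Pi.single_apply]
      simp [sub_mul, ite_mul, one_mul, zero_mul, Finset.sum_sub_distrib, Finset.sum_ite_eq']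
      exact congrArg₂ (fun x y => x - y) (hMδ i) (hMδ j)
    rw [h2, hMapp, hMapp, hMapp, hMapp, hEapp, hEapp, hEapp, hEapp, hydiag, hydiag]
    ring
  clear hξ hEZ hMZ hMrow hMapp hMsym hMfact hMfact2 hPΨP hΨdef hN hNmatdef hcol
  clear hxval hsx hMul1 hdot1 hMdef hσdef hudef
  clear_value Ψ M Nmat σ u
  clear M Nmat σ u ξ N hEapp
  -- positive semidefiniteness of 1 + t • Ψ
  set cb : ℝ := ∑ i, ∑ j, |Ψ i j| with hcbdef
  have hcb0 : 0 ≤ cb :=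
    Finset.sum_nonneg fun i _ => Finset.sum_nonneg fun j _ => abs_nonneg _
  set t : ℝ := 1 / (cb + 1) with htdef
  have hcb1 : (0:ℝ) < cb + 1 := by linarith
  have ht : 0 < t := by rw [htdef]; positivity
  have htc1 : t * (cb + 1) = 1 := by rw [htdef]; field_simp
  have hquadbound : ∀ v : Fin r → ℝ, |v ⬝ᵥ (Ψ *ᵥ v)| ≤ cb * (v ⬝ᵥ v) := by
    intro v
    have hsq : ∀ i, v i ^ 2 ≤ v ⬝ᵥ v := by
      intro i
      have h := Finset.single_le_sum (f := fun i => v i * v i)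
        (fun i _ => mul_self_nonneg (v i)) (Finset.mem_univ i)
      simpa [dotProduct, pow_two] using h
    calc |v ⬝ᵥ (Ψ *ᵥ v)| = |∑ i, ∑ j, v i * (Ψ i j * v j)| := by
          simp [dotProduct, Matrix.mulVec, Finset.mul_sum]
      _ ≤ ∑ i, |∑ j, v i * (Ψ i j * v j)| := Finset.abs_sum_le_sum_abs _ _
      _ ≤ ∑ i, ∑ j, |v i * (Ψ i j * v j)| :=
          Finset.sum_le_sum fun i _ => Finset.abs_sum_le_sum_abs _ _
      _ ≤ ∑ i, ∑ j, |Ψ i j| * (v ⬝ᵥ v) := by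
          refine Finset.sum_le_sum fun i _ => Finset.sum_le_sum fun j _ => ?_
          have habs : |v i * (Ψ i j * v j)| = |Ψ i j| * |v i * v j| := by
            rw [abs_mul, abs_mul, abs_mul]; ring
          rw [habs]
          refine mul_le_mul_of_nonneg_left ?_ (abs_nonneg _)
          have h1 : |v i * v j| ≤ (v i ^ 2 + v j ^ 2) / 2 := by
            rw [abs_mul]
            nlinarith [sq_nonneg (|v i| - |v j|), sq_abs (v i), sq_abs (v j),
              abs_nonneg (v i), abs_nonneg (v j)]
          have h2 := hsq i
          have h3 := hsq j
          linarith
      _ = cb * (v ⬝ᵥ v) := by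
          rw [hcbdef, Finset.sum_mul]
          exact Finset.sum_congr rfl fun i _ => (Finset.sum_mul _ _ _).symm
  have hpsd : ((1 : Matrix (Fin r) (Fin r) ℝ) + t • Ψ).PosSemidef := by
    refine Matrix.PosSemidef.of_dotProduct_mulVec_nonneg ?_ ?_
    · show ((1 : Matrix (Fin r) (Fin r) ℝ) + t • Ψ)ᴴ = _
      ext a b
      simp only [Matrix.conjTranspose_apply, Matrix.add_apply, Matrix.smul_apply,
        Matrix.one_apply, star_trivial, smul_eq_mul]
      have hs := congrFun (congrFun hΨsym a) b
      rw [Matrix.transpose_apply] at hs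
      rw [hs]
      by_cases hab : a = b
      · subst hab; simp
      · rw [if_neg hab, if_neg (Ne.symm hab)]
    · intro v
      have hstar : star v = v := by simp
      rw [hstar, Matrix.add_mulVec, Matrix.one_mulVec, dotProduct_add,
        Matrix.smul_mulVec, dotProduct_smul, smul_eq_mul]
      have hb := hquadbound v
      have hS0 : 0 ≤ v ⬝ᵥ v := Finset.sum_nonneg fun i _ => mul_self_nonneg (v i)
      have hlow : -(cb * (v ⬝ᵥ v)) ≤ v ⬝ᵥ (Ψ *ᵥ v) := neg_le_of_abs_le hb
      nlinarith [mul_le_mul_of_nonneg_left hlow ht.le, mul_nonneg hS0 ht.le,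
        mul_nonneg (mul_nonneg ht.le hcb0) hS0]
  -- the new framework
  have hA2 : CFC.sqrt (1 + t • Ψ) * CFC.sqrt (1 + t • Ψ) = 1 + t • Ψ :=
    CFC.sqrt_mul_sqrt_self _ hpsd.nonneg
  have hAsym : (CFC.sqrt (1 + t • Ψ))ᵀ = CFC.sqrt (1 + t • Ψ) := by
    have h : (CFC.sqrt (1 + t • Ψ))ᴴ = CFC.sqrt (1 + t • Ψ) := (CFC.sqrt_nonneg _).isSelfAdjoint
    ext a b
    have h2 := congrFun (congrFun h a) b
    rw [Matrix.conjTranspose_apply, star_trivial] at h2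
    rw [Matrix.transpose_apply]
    exact h2
  set A : Matrix (Fin r) (Fin r) ℝ := CFC.sqrt (1 + t • Ψ) with hAdef
  have hdist : ∀ i j, sqDist (A *ᵥ p i) (A *ᵥ p j) =
      sqDist (p i) (p j) + t * (-2 * (y i j + y j i)) := by
    intro i j
    have h := sqDist_affine A 0 (p i) (p j)
    simp only [add_zero] at h
    rw [h]
    have hfact : Aᵀ * A - 1 = t • Ψ := by
      rw [hAsym, hAdef, hA2]; abel
    rw [hfact, Matrix.smul_mulVec, dotProduct_smul, smul_eq_mul, hquad i j]
  clear hAdef hA2 hAsym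
  clear_value A
  clear hpsd hquadbound htc1 hquad hΨsym hcbdef htdef
  clear_value t cb
  clear hcb0 hcb1 cb Ψ
  clear hGG hGG' hGsym hGinvsym hGunit hGdef hPdef
  clear_value G P
  clear G hZ1 hZ4 hPker hspan hdim hcentroid P hnR hydiag
  have hyCnn : ∀ i j, (i, j) ∈ C → 0 ≤ y i j := by
    intro i j hC
    rcases eq_or_ne (y i j) 0 with h | h
    · exact le_of_eq h.symm
    · obtain ⟨-, hcase⟩ := hsupp i j h
      rcases hcase with hcase | hcase | hcase
      · exact absurd (Or.inl (Or.inr hC)) hcase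
      · exact hyC i j hC hcase.2
      · exact (Set.eq_empty_iff_forall_notMem.mp hCS (i, j) ⟨hC, hcase.1⟩).elim
  have hySnp : ∀ i j, (i, j) ∈ S → y i j ≤ 0 := by
    intro i j hS
    rcases eq_or_ne (y i j) 0 with h | h
    · exact le_of_eq h
    · obtain ⟨-, hcase⟩ := hsupp i j h
      rcases hcase with hcase | hcase | hcase
      · exact absurd (Or.inr hS) hcase
      · exact (Set.eq_empty_iff_forall_notMem.mp hCS (i, j) ⟨hcase.1, hS⟩).elim
      · exact hyS i j hS hcase.2
  have hyB0 : ∀ i j, (i, j) ∈ B → y i j = 0 := by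
    intro i j hB
    by_contra h
    obtain ⟨-, hcase⟩ := hsupp i j h
    rcases hcase with hcase | hcase | hcase
    · exact hcase (Or.inl (Or.inl hB))
    · exact Set.eq_empty_iff_forall_notMem.mp hBC (i, j) ⟨hB, hcase.1⟩
    · exact Set.eq_empty_iff_forall_notMem.mp hBS (i, j) ⟨hB, hcase.1⟩
  refine ⟨fun i => A *ᵥ p i, ⟨⟨?_, ?_, ?_⟩, A, 0, fun i => (add_zero _).symm⟩, ?_⟩
  · rintro ⟨i, j⟩ hB
    show sqDist (A *ᵥ p i) (A *ᵥ p j) = sqDist (p i) (p j)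
    rw [hdist i j, hyB0 i j hB, hyB0 j i (hBsym i j hB)]
    ring
  · rintro ⟨i, j⟩ hC
    show sqDist (A *ᵥ p i) (A *ᵥ p j) ≤ sqDist (p i) (p j)
    rw [hdist i j]
    have h1 := hyCnn i j hC
    have h2 := hyCnn j i (hCsym i j hC)
    nlinarith [ht.le]
  · rintro ⟨i, j⟩ hS
    show sqDist (p i) (p j) ≤ sqDist (A *ᵥ p i) (A *ᵥ p j)
    rw [hdist i j]
    have h1 := hySnp i j hS
    have h2 := hySnp j i (hSsym i j hS)
    nlinarith [ht.le]
  · intro hcong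
    have hex : ∃ i j, y i j ≠ 0 := by
      by_contra h
      push_neg at h
      apply hy0
      funext i j
      exact h i j
    obtain ⟨i, j, hij⟩ := hex
    have hji : y j i = 0 := by
      by_contra h'
      have h1 := (hsupp i j hij).1
      have h2 := (hsupp j i h').1
      exact absurd (h1.trans h2) (lt_irrefl i)
    have hc := hcong i j
    rw [show sqDist ((fun i => A *ᵥ p i) i) ((fun i => A *ᵥ p i) j) =
        sqDist (A *ᵥ p i) (A *ᵥ p j) from rfl] at hc
    rw [hdist i j, hji, add_zero] at hc
    have ht0 : t * (-2 * y i j) = 0 := by linarith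
    rcases mul_eq_zero.mp ht0 with h | h
    · exact absurd h ht.ne'
    · apply hij
      linarith

/-- given a proper stress `ω`, there is a framework affinely-dominated
by but not congruent to `(G,p)` iff there are a non-zero `y` supported on
`Ē ∪ C⁰ ∪ S⁰` (with the proper signs) and `ξ` with `ℰ⁰(y) Z = e ξᵀ`. -/
theorem statement16 {n r : ℕ}
    (B C S : Set (Fin n × Fin n)) (hG : TensegrityGraph B C S)
    (p : Fin n → Fin r → ℝ)
    (hdim : affineSpan ℝ (Set.range p) = ⊤)
    (hcentroid : ∀ k, ∑ i, p i k = 0)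
    (ω : Fin n → Fin n → ℝ)
    (hstress : IsStress (B ∪ C ∪ S) p ω)
    (hproper : IsProperStress C S ω)
    (Z : Matrix (Fin n) (Fin (n - r - 1)) ℝ)
    (hZ : IsGaleMatrix (Matrix.of p) Z) :
    (∃ p' : Fin n → Fin r → ℝ,
        AffinelyDominated B C S p p' ∧ ¬ FrameworkCongruent p p') ↔
      ∃ y : Fin n → Fin n → ℝ, y ≠ 0 ∧
        (∀ i j, y i j ≠ 0 → i < j ∧ ((i, j) ∉ B ∪ C ∪ S ∨
          ((i, j) ∈ C ∧ ω i j = 0) ∨ ((i, j) ∈ S ∧ ω i j = 0))) ∧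
        (∀ i j, (i, j) ∈ C → ω i j = 0 → 0 ≤ y i j) ∧
        (∀ i j, (i, j) ∈ S → ω i j = 0 → y i j ≤ 0) ∧
        ∃ ξ : Fin (n - r - 1) → ℝ,
          EscrY y * Z = Matrix.vecMulVec (fun _ => 1) ξ := by
  classical
  obtain ⟨hBsym, hCsym, hSsym, hloop, hBC, hBS, hCS, hconn⟩ := hG
  obtain ⟨hωsym, hω0, heq⟩ := hstress
  obtain ⟨hpC, hpS⟩ := hproper
  obtain ⟨hZ1, hZ2, hZ3, hZ4⟩ := hZ
  rcases Nat.eq_zero_or_pos n with hn | hn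
  · subst hn
    constructor
    · rintro ⟨p', hAD, hnc⟩
      exact absurd (fun i j => Fin.elim0 i) hnc
    · rintro ⟨y, hy0, -⟩
      exact absurd (funext fun i => Fin.elim0 i) hy0
  constructor
  · rintro ⟨p', hAD, hnc⟩
    exact forward_dir B C S p ω hωsym hω0 heq hpC hpS Z hZ1 hZ2 p' hAD.1 hAD.2 hnc
  · rintro ⟨y, hy0, hsupp, hyC, hyS, ξ, hξ⟩
    exact backward_dir hn B C S hBsym hCsym hSsym hBC hBS hCS p hdim hcentroid ω Z
      hZ1 hZ2 hZ4 y hy0 hsupp hyC hyS ξ hξ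
end
end

section
/- Let (G,p) be an r-dimensional tensegrity framework on n vertices in ℝ^r and let Ω be a stress matrix of (G,p) with rank n−r−1. Then there exist an index set J = {j_1,…,j_{n−r−1}} ⊂ {1,…,n} and a Gale matrix Ẑ of (G,p) whose k-th column is the j_k-th column of Ω; in particular, Ẑ has the property that for every k = 1,…,n−r−1, the entry ẑ_{i j_k} = 0 for each missing edge {i,j_k} ∈ Ē of G. -/
open Matrix BigOperators

noncomputable section

namespace Statement17Aux

/-- Summation as a linear map. -/
noncomputable def sumL (n : ℕ) : (Fin n → ℝ) →ₗ[ℝ] ℝ where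
  toFun v := ∑ i, v i
  map_add' u v := by simp [Finset.sum_add_distrib]
  map_smul' c v := by simp [Finset.mul_sum]

@[simp] lemma sumL_apply {n : ℕ} (v : Fin n → ℝ) : sumL n v = ∑ i, v i := rfl

end Statement17Aux

/-- if `Ω` is a stress matrix of rank `n-r-1`, then some `n-r-1`
columns of `Ω` form a Gale matrix `Ẑ` of `(G,p)`; in particular `ẑ_{i j_k} = 0`
for every missing edge `{i, j_k}`. -/
theorem statement17 {n r : ℕ}
    (E : Set (Fin n × Fin n)) (hG : TensegrityGraph E ∅ ∅)
    (p : Fin n → Fin r → ℝ)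
    (hdim : affineSpan ℝ (Set.range p) = ⊤)
    (hcentroid : ∀ k, ∑ i, p i k = 0)
    (Ω : Matrix (Fin n) (Fin n) ℝ)
    (hΩ : IsStressMatrix E (Matrix.of p) Ω)
    (hrank : Ω.rank = n - r - 1) :
    ∃ g : Fin (n - r - 1) → Fin n, Function.Injective g ∧
      IsGaleMatrix (Matrix.of p) (Matrix.of fun i k => Ω i (g k)) ∧
      ∀ (k : Fin (n - r - 1)) (i : Fin n),
        i ≠ g k → (i, g k) ∉ E → Ω i (g k) = 0 := by
  classical
  obtain ⟨hsymm, hmiss, hPO, hOe⟩ := hΩ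
  set P : Matrix (Fin n) (Fin r) ℝ := Matrix.of p with hPdef
  -- n is positive
  have hn : 0 < n := by
    rcases Nat.eq_zero_or_pos n with h | h
    · exfalso
      subst h
      have : (Set.range p) = ∅ := Set.range_eq_empty p
      rw [this] at hdim
      simp only [spanPoints, AffineSubspace.ext_iff] at hdim
      have h0 : ((0 : Fin r → ℝ) : Fin r → ℝ) ∈ (affineSpan ℝ (∅ : Set (Fin r → ℝ)) : Set (Fin r → ℝ)) := by
        rw [hdim]; trivial
      simp at h0
    · exact h
  -- column sums of Ω vanish
  have hcolsum : ∀ j, ∑ i, Ω i j = 0 := by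
    intro j
    have h2 : ∑ i, Ω i j = (Ω *ᵥ fun _ => (1 : ℝ)) j := by
      simp only [Matrix.mulVec, dotProduct, mul_one]
      exact Finset.sum_congr rfl fun i _ => (hsymm.apply i j).symm
    rw [h2, hOe]
    rfl
  -- the points span ℝ^r linearly
  have hspan : Submodule.span ℝ (Set.range p) = ⊤ := by
    have h1 : vectorSpan ℝ (Set.range p) = ⊤ := by
      rw [← direction_affineSpan, hdim, AffineSubspace.direction_top]
    rw [eq_top_iff, ← h1, vectorSpan_def]
    refine Submodule.span_le.2 ?_
    rintro x ⟨a, ha, c, hc, rfl⟩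
    exact Submodule.sub_mem _ (Submodule.subset_span ha) (Submodule.subset_span hc)
  -- Pᵀ e = 0
  have hPe : Pᵀ *ᵥ (fun _ => (1 : ℝ)) = 0 := by
    funext k
    simp only [Matrix.mulVec, dotProduct, mul_one]
    exact hcentroid k
  -- the linear map (Pᵀ ·, ∑ ·)
  set f : (Fin n → ℝ) →ₗ[ℝ] (Fin r → ℝ) × ℝ :=
    (Matrix.mulVecLin Pᵀ).prod (Statement17Aux.sumL n) with hfdef
  have hf_apply : ∀ v : Fin n → ℝ, f v = (Pᵀ *ᵥ v, ∑ i, v i) := fun v => rfl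
  have hfsurj : LinearMap.range f = ⊤ := by
    rw [LinearMap.range_eq_top]
    rintro ⟨w, c⟩
    have hw : w ∈ Submodule.span ℝ (Set.range p) := hspan ▸ Submodule.mem_top
    rw [Finsupp.mem_span_range_iff_exists_finsupp] at hw
    obtain ⟨a, ha⟩ := hw
    set a' : Fin n → ℝ := fun i => a i with ha'
    have ha2 : ∑ i, a' i • p i = w := by
      rw [← ha, Finsupp.sum_fintype]
      intro i; simp
    set t := (c - ∑ i, a' i) / n with htdef
    refine ⟨(fun i => a' i + t), ?_⟩
    rw [hf_apply]
    have h1 : Pᵀ *ᵥ (fun i => a' i + t) = w := by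
      have hsplit : (fun i => a' i + t) = a' + fun _ => t := rfl
      rw [hsplit, Matrix.mulVec_add]
      have h2 : Pᵀ *ᵥ a' = w := by
        funext k
        rw [← ha2]
        simp only [Matrix.mulVec, dotProduct, Finset.sum_apply, Pi.smul_apply, smul_eq_mul]
        exact Finset.sum_congr rfl fun i _ => mul_comm _ _
      have h3 : Pᵀ *ᵥ (fun _ => t) = 0 := by
        have h4 : (fun _ : Fin n => t) = t • (fun _ => (1 : ℝ)) := by
          funext i; simp
        rw [h4, Matrix.mulVec_smul, hPe, smul_zero]
      rw [h2, h3, add_zero]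
    have h4 : ∑ i, (a' i + t) = c := by
      simp only [Finset.sum_add_distrib, Finset.sum_const,
        Finset.card_univ, Fintype.card_fin, nsmul_eq_mul, htdef]
      have hnne : (n : ℝ) ≠ 0 := Nat.cast_ne_zero.mpr hn.ne'
      field_simp
      ring
    rw [h1, h4]
  set W := LinearMap.ker f with hWdef
  have hWrank : Module.finrank ℝ W = n - r - 1 := by
    have h1 := LinearMap.finrank_range_add_finrank_ker f
    rw [hfsurj, finrank_top] at h1
    simp only [Module.finrank_prod, Module.finrank_pi, Module.finrank_self,
      Fintype.card_fin] at h1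
    rw [hWdef]
    omega
  set C := LinearMap.range Ω.mulVecLin with hCdef
  have hCW : C ≤ W := by
    rintro x ⟨y, rfl⟩
    rw [LinearMap.mem_ker, hf_apply]
    have h1 : Pᵀ *ᵥ (Ω.mulVecLin y) = 0 := by
      show Pᵀ *ᵥ (Ω *ᵥ y) = 0
      rw [Matrix.mulVec_mulVec, hPO, Matrix.zero_mulVec]
    have h2 : ∑ i, (Ω.mulVecLin y) i = 0 := by
      show ∑ i, (Ω *ᵥ y) i = 0
      simp only [Matrix.mulVec, dotProduct]
      rw [Finset.sum_comm]
      refine Finset.sum_eq_zero fun j _ => ?_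
      rw [← Finset.sum_mul, hcolsum j, zero_mul]
    rw [h1, h2]
    rfl
  have hC : Module.finrank ℝ C = n - r - 1 := by rw [← hrank]; rfl
  have hCWeq : C = W := Submodule.eq_of_le_of_finrank_le hCW (by rw [hWrank, hC])
  -- pick a basis of C among columns of Ω
  obtain ⟨b, hb_sub, hb_span, hb_li⟩ := exists_linearIndependent ℝ (Set.range Ωᵀ)
  have hbfin : b.Finite := (Set.finite_range Ωᵀ).subset hb_sub
  haveI : Fintype b := hbfin.fintype
  have hbcard : Fintype.card b = n - r - 1 := by
    rw [← Set.toFinset_card, ← finrank_span_set_eq_card hb_li, hb_span]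
    change Module.finrank ℝ (Submodule.span ℝ (Set.range Ω.col)) = _
    rw [← Matrix.range_mulVecLin]
    exact hC
  set e : Fin (n - r - 1) ≃ b := (Fintype.equivFinOfCardEq hbcard).symm with hedef
  have hpick : ∀ x : b, ∃ j : Fin n, Ωᵀ j = (x : Fin n → ℝ) := fun x => hb_sub x.2
  choose gg hgg using hpick
  set g : Fin (n - r - 1) → Fin n := fun k => gg (e k) with hgdef
  have hcol : ∀ k, (fun i => Ω i (g k)) = ((e k : Fin n → ℝ)) := by
    intro k
    rw [← hgg (e k)]
    rfl
  have hginj : Function.Injective g := by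
    intro k1 k2 h
    apply e.injective
    apply Subtype.ext
    have h' : gg (e k1) = gg (e k2) := h
    rw [← hgg (e k1), ← hgg (e k2), h']
  have hli : LinearIndependent ℝ (fun k i => Ω i (g k)) := by
    have h1 : (fun k i => Ω i (g k)) = (fun x : b => (x : Fin n → ℝ)) ∘ e := by
      funext k
      rw [hcol k]
      rfl
    rw [h1]
    exact hb_li.comp e e.injective
  have hrange2 : (Set.range fun k i => Ω i (g k)) = b := by
    ext x
    constructor
    · rintro ⟨k, rfl⟩
      have hmem := (e k).2
      rw [← hcol k] at hmem
      exact hmem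
    · intro hx
      refine ⟨e.symm ⟨x, hx⟩, ?_⟩
      show (fun i => Ω i (g (e.symm ⟨x, hx⟩))) = x
      rw [hcol]
      simp
  have hspan2 : Submodule.span ℝ (Set.range fun k i => Ω i (g k)) = W := by
    rw [hrange2, hb_span]
    change Submodule.span ℝ (Set.range Ω.col) = W
    rw [← Matrix.range_mulVecLin]
    exact hCWeq
  refine ⟨g, hginj, ⟨?_, ?_, ?_, ?_⟩, ?_⟩
  · intro k
    funext l
    have h1 := congrFun (congrFun hPO l) (g k)
    simpa [Matrix.mul_apply, Matrix.mulVec, dotProduct] using h1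
  · intro k
    exact hcolsum (g k)
  · exact hli
  · intro v hv1 hv2
    show v ∈ Submodule.span ℝ (Set.range fun k i => Ω i (g k))
    rw [hspan2, hWdef, LinearMap.mem_ker, hf_apply, hv1, hv2]
    rfl
  · intro k i hne hnin
    exact hmiss i (g k) hne hnin
end
end

section
/- Let (G,p) be an r-dimensional tensegrity framework on n vertices in ℝ^r, let Z be a Gale matrix of (G,p), and assume (G,p) has a proper stress matrix Ω (associated with proper stress ω) with rank Ω = n−r−1. Then there exists a tensegrity framework (G,p') affinely-dominated by, but not congruent to, (G,p) if and only if there exists a non-zero y = (y_ij) ∈ ℝ^{|Ē|+|C⁰|+|S⁰|} with y_ij ≥ 0 for all {i,j} ∈ C⁰ and y_ij ≤ 0 for all {i,j} ∈ S⁰ such that ℰ⁰(y) Z = 0, where ℰ⁰(y) = Σ_{{i,j} ∈ Ē ∪ C⁰ ∪ S⁰} y_ij E^{ij}, C⁰ = {{i,j}∈C : ω_ij = 0} and S⁰ = {{i,j}∈S : ω_ij = 0}. -/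
open Matrix BigOperators

noncomputable section

namespace Stmt18aux

lemma sqDist_eq_dot {r : ℕ} (x y : Fin r → ℝ) : sqDist x y = (x - y) ⬝ᵥ (x - y) := by
  simp [sqDist, dotProduct, sq]

lemma sqDist_comm {r : ℕ} (x y : Fin r → ℝ) : sqDist x y = sqDist y x := by
  unfold sqDist
  exact Finset.sum_congr rfl fun k _ => by ring

lemma EscrY_apply {n : ℕ} (y : Fin n → Fin n → ℝ) (i j : Fin n) :
    EscrY y i j = y i j + y j i := by
  classical
  simp only [EscrY, Matrix.sum_apply, Matrix.smul_apply, Emat, Matrix.add_apply,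
    Matrix.vecMulVec_apply, Pi.single_apply, smul_eq_mul]
  simp [mul_add, mul_ite, ite_mul, mul_one, mul_zero, zero_mul,
    Finset.sum_ite_eq, Finset.sum_ite_eq', Finset.sum_add_distrib]

lemma quad_expand {r : ℕ} (Φ : Matrix (Fin r) (Fin r) ℝ) (u w : Fin r → ℝ) :
    (u - w) ⬝ᵥ (Φ *ᵥ (u - w)) =
      u ⬝ᵥ (Φ *ᵥ u) + w ⬝ᵥ (Φ *ᵥ w) - u ⬝ᵥ (Φ *ᵥ w) - w ⬝ᵥ (Φ *ᵥ u) := by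
  simp [Matrix.mulVec_sub, dotProduct_sub, sub_dotProduct]; ring

lemma Mentry {n r : ℕ} (p : Fin n → Fin r → ℝ) (Φ : Matrix (Fin r) (Fin r) ℝ) (a b : Fin n) :
    (Matrix.of p * Φ * (Matrix.of p)ᵀ) a b = p a ⬝ᵥ (Φ *ᵥ p b) := by
  simp only [Matrix.mul_apply, Matrix.transpose_apply, Matrix.of_apply, dotProduct,
    Matrix.mulVec, Finset.sum_mul, Finset.mul_sum]
  rw [Finset.sum_comm]
  exact Finset.sum_congr rfl fun l _ => Finset.sum_congr rfl fun k _ => by ring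

/-- the linear map `v ↦ u ⬝ᵥ v`. -/
def dotL {m : ℕ} (u : Fin m → ℝ) : (Fin m → ℝ) →ₗ[ℝ] ℝ where
  toFun v := u ⬝ᵥ v
  map_add' x y := dotProduct_add u x y
  map_smul' c x := by simp [dotProduct_smul]

@[simp] lemma dotL_apply {m : ℕ} (u v : Fin m → ℝ) : dotL u v = u ⬝ᵥ v := rfl

lemma stressMatrix_mulVec {n : ℕ} (ω : Fin n → Fin n → ℝ) (hdiag : ∀ i, ω i i = 0)
    (w : Fin n → ℝ) (i : Fin n) :
    (stressMatrix ω *ᵥ w) i = ∑ j, ω i j * (w i - w j) := by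
  classical
  have key : ∀ j, (stressMatrix ω) i j * w j
      = ((if i = j then (∑ k, ω i k) * w i else 0) + ω i j * (w i - w j)) - ω i j * w i := by
    intro j
    by_cases h : i = j
    · subst h; simp [stressMatrix, hdiag i]
    · simp only [stressMatrix, Matrix.of_apply, if_neg h]; ring
  have h1 : (stressMatrix ω *ᵥ w) i = ∑ j, (stressMatrix ω) i j * w j := by
    simp [Matrix.mulVec, dotProduct]
  rw [h1, Finset.sum_congr rfl fun j _ => key j, Finset.sum_sub_distrib,
    Finset.sum_add_distrib, Finset.sum_ite_eq, ← Finset.sum_mul]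
  simp


lemma mul_vmv {n m k : ℕ} (A : Matrix (Fin n) (Fin m) ℝ) (a : Fin m → ℝ) (b : Fin k → ℝ) :
    A * Matrix.vecMulVec a b = Matrix.vecMulVec (A *ᵥ a) b := by
  ext i j
  simp only [Matrix.mul_apply, Matrix.vecMulVec_apply, Matrix.mulVec, dotProduct,
    Finset.sum_mul]
  exact Finset.sum_congr rfl fun l _ => by ring

lemma vmv_mul {n m k : ℕ} (A : Matrix (Fin m) (Fin k) ℝ) (a : Fin n → ℝ) (b : Fin m → ℝ) :
    Matrix.vecMulVec a b * A = Matrix.vecMulVec a (b ᵥ* A) := by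
  ext i j
  simp only [Matrix.mul_apply, Matrix.vecMulVec_apply, Matrix.vecMul, dotProduct,
    Finset.mul_sum]
  exact Finset.sum_congr rfl fun l _ => by ring

lemma vmv_transpose {n m : ℕ} (a : Fin n → ℝ) (b : Fin m → ℝ) :
    (Matrix.vecMulVec a b)ᵀ = Matrix.vecMulVec b a := by
  ext i j; simp [Matrix.vecMulVec_apply, mul_comm]

lemma span_fact {n r : ℕ} (p : Fin n → Fin r → ℝ)
    (hdim : affineSpan ℝ (Set.range p) = ⊤) :
    ∀ c : Fin r → ℝ, (∀ i, p i ⬝ᵥ c = 0) → c = 0 := by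
  intro c hc
  have h1 : vectorSpan ℝ (Set.range p) = ⊤ := by
    rw [← direction_affineSpan, hdim]
    exact AffineSubspace.direction_top ℝ (Fin r → ℝ) (Fin r → ℝ)
  have h2 : Submodule.span ℝ (Set.range p) = ⊤ := by
    rw [eq_top_iff, ← h1, vectorSpan_def]
    apply Submodule.span_le.2
    rintro x ⟨u, ⟨i, rfl⟩, w, ⟨j, rfl⟩, rfl⟩
    exact sub_mem (Submodule.subset_span ⟨i, rfl⟩) (Submodule.subset_span ⟨j, rfl⟩)
  have hmem : c ∈ Submodule.span ℝ (Set.range p) := h2 ▸ Submodule.mem_top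
  have hall : ∀ v ∈ Submodule.span ℝ (Set.range p), v ⬝ᵥ c = 0 := by
    intro v hv
    induction hv using Submodule.span_induction with
    | mem x hx => obtain ⟨i, rfl⟩ := hx; exact hc i
    | zero => simp
    | add x y _ _ hx hy => rw [add_dotProduct, hx, hy, add_zero]
    | smul a x _ hx => rw [smul_dotProduct, hx, smul_zero]
  exact dotProduct_self_eq_zero.1 (hall c hmem)


/-- The affine evaluation linear map `(c, t) ↦ P c + t e` into Euclidean space. -/
def affL {n r : ℕ} (p : Fin n → Fin r → ℝ) :
    ((Fin r → ℝ) × ℝ) →ₗ[ℝ] EuclideanSpace ℝ (Fin n) where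
  toFun ct := WithLp.toLp 2 (fun i => (Matrix.of p *ᵥ ct.1) i + ct.2 : Fin n → ℝ)
  map_add' x y := by
    ext i
    simp [Matrix.mulVec_add, Matrix.mulVec]
    ring
  map_smul' a x := by
    ext i
    simp [Matrix.mulVec_smul, Matrix.mulVec]
    ring

lemma affL_apply {n r : ℕ} (p : Fin n → Fin r → ℝ) (c : Fin r → ℝ) (t : ℝ) (i : Fin n) :
    affL p (c, t) i = (Matrix.of p *ᵥ c) i + t := rfl

lemma inner_comp {n r : ℕ} (p : Fin n → Fin r → ℝ) (c : Fin r → ℝ) (t : ℝ)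
    (v : Fin n → ℝ) :
    ∑ i, ((Matrix.of p *ᵥ c) i + t) * v i
      = (∑ l, c l * ((Matrix.of p)ᵀ *ᵥ v) l) + t * ∑ i, v i := by
  simp only [Matrix.mulVec, dotProduct, Matrix.transpose_apply, Matrix.of_apply,
    add_mul, Finset.sum_add_distrib, Finset.sum_mul, Finset.mul_sum]
  congr 1
  rw [Finset.sum_comm]
  exact Finset.sum_congr rfl fun i _ => Finset.sum_congr rfl fun l _ => by ring

lemma dual_lemma {n r : ℕ} (p : Fin n → Fin r → ℝ) (u : Fin n → ℝ)
    (h : ∀ v : Fin n → ℝ, (Matrix.of p)ᵀ *ᵥ v = 0 → ∑ i, v i = 0 → u ⬝ᵥ v = 0) :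
    ∃ (c : Fin r → ℝ) (t : ℝ), ∀ i, u i = (Matrix.of p *ᵥ c) i + t := by
  classical
  set W : Submodule ℝ (EuclideanSpace ℝ (Fin n)) := LinearMap.range (affL p) with hW
  have hinner : ∀ (x y : EuclideanSpace ℝ (Fin n)),
      (inner ℝ x y : ℝ) = ∑ i, x i * y i := by
    intro x y
    rw [PiLp.inner_apply]
    exact Finset.sum_congr rfl fun i _ => by rw [RCLike.inner_apply]; simp [mul_comm]
  have hperp : ∀ v : EuclideanSpace ℝ (Fin n), v ∈ Wᗮ ↔
      ((Matrix.of p)ᵀ *ᵥ (v : Fin n → ℝ) = 0 ∧ ∑ i, v i = 0) := by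
    intro v
    rw [Submodule.mem_orthogonal]
    constructor
    · intro hv
      constructor
      · funext l
        show ((Matrix.of p)ᵀ *ᵥ v) l = 0
        have h0 := hv (affL p (Pi.single l 1, 0)) (LinearMap.mem_range_self _ _)
        rw [hinner] at h0
        have h0' : ∑ i, ((Matrix.of p *ᵥ Pi.single l 1) i + 0) * v i = 0 := h0
        rw [inner_comp p (Pi.single l 1) 0 v] at h0'
        simpa [Pi.single_apply, ite_mul, Finset.sum_ite_eq'] using h0'
      · have h0 := hv (affL p (0, 1)) (LinearMap.mem_range_self _ _)
        rw [hinner] at h0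
        have h0' : ∑ i, ((Matrix.of p *ᵥ (0 : Fin r → ℝ)) i + 1) * v i = 0 := h0
        rw [inner_comp p (0 : Fin r → ℝ) 1 v] at h0'
        simpa using h0'
    · rintro ⟨h1, h2⟩ w ⟨⟨c, t⟩, rfl⟩
      rw [hinner]
      have h3 : ∑ i, ((Matrix.of p *ᵥ c) i + t) * v i = 0 := by
        rw [inner_comp p c t v, h1, h2]
        simp
      exact h3
  have humem : WithLp.toLp 2 u ∈ Wᗮᗮ := by
    rw [Submodule.mem_orthogonal]
    intro x hx
    obtain ⟨hx1, hx2⟩ := (hperp x).1 hx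
    rw [hinner]
    have h4 := h x hx1 hx2
    rw [dotProduct] at h4
    rw [← h4]
    exact Finset.sum_congr rfl fun i _ => by ring
  rw [Submodule.orthogonal_orthogonal] at humem
  obtain ⟨⟨c, t⟩, hct⟩ := humem
  exact ⟨c, t, fun i => (congrArg (fun w => w i) hct).symm⟩

theorem fwd {n r : ℕ}
    (B C S : Set (Fin n × Fin n)) (hG : TensegrityGraph B C S)
    (p : Fin n → Fin r → ℝ)
    (hdim : affineSpan ℝ (Set.range p) = ⊤)
    (hcentroid : ∀ k, ∑ i, p i k = 0)
    (ω : Fin n → Fin n → ℝ)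
    (hstress : IsStress (B ∪ C ∪ S) p ω)
    (hproper : IsProperStress C S ω)
    (hrank : (stressMatrix ω).rank = n - r - 1)
    (Z : Matrix (Fin n) (Fin (n - r - 1)) ℝ)
    (hZ : IsGaleMatrix (Matrix.of p) Z)
    (p' : Fin n → Fin r → ℝ) (hdom : AffinelyDominated B C S p p')
    (hnc : ¬ FrameworkCongruent p p') :
    ∃ y : Fin n → Fin n → ℝ, y ≠ 0 ∧
        (∀ i j, y i j ≠ 0 → i < j ∧ ((i, j) ∉ B ∪ C ∪ S ∨
          ((i, j) ∈ C ∧ ω i j = 0) ∨ ((i, j) ∈ S ∧ ω i j = 0))) ∧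
        (∀ i j, (i, j) ∈ C → ω i j = 0 → 0 ≤ y i j) ∧
        (∀ i j, (i, j) ∈ S → ω i j = 0 → y i j ≤ 0) ∧
        EscrY y * Z = 0 := by
  classical
  obtain ⟨⟨hbar, hcab, hstru⟩, A, b, hq⟩ := hdom
  obtain ⟨hsymω, hω0, heq⟩ := hstress
  obtain ⟨symB, symC, symS, hloop, hBC, hBS, hCS, hconn⟩ := hG
  have hωdiag : ∀ i, ω i i = 0 := fun i => hω0 i i (hloop i)
  have hn : 0 < n := by
    obtain ⟨i⟩ := hconn.nonempty
    exact i.pos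
  set Φ : Matrix (Fin r) (Fin r) ℝ := Aᵀ * A - 1 with hΦdef
  set Δ : Fin n → Fin n → ℝ :=
    fun i j => sqDist (p' i) (p' j) - sqDist (p i) (p j) with hΔdef
  have hqd : ∀ i j, p' i - p' j = A *ᵥ (p i - p j) := by
    intro i j
    rw [hq i, hq j, Matrix.mulVec_sub]
    abel
  have hΔform : ∀ i j, Δ i j = (p i - p j) ⬝ᵥ (Φ *ᵥ (p i - p j)) := by
    intro i j
    have key : (A *ᵥ (p i - p j)) ⬝ᵥ (A *ᵥ (p i - p j))
        = (p i - p j) ⬝ᵥ ((Aᵀ * A) *ᵥ (p i - p j)) := by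
      rw [dotProduct_mulVec, ← Matrix.mulVec_transpose, Matrix.mulVec_mulVec,
        dotProduct_comm]
    rw [hΔdef]
    simp only
    rw [sqDist_eq_dot, sqDist_eq_dot, hqd i j, key, hΦdef, Matrix.sub_mulVec,
      Matrix.one_mulVec]
    simp only [dotProduct_sub]
  have hΔsymm : ∀ i j, Δ i j = Δ j i := by
    intro i j
    rw [hΔdef]
    simp only
    rw [sqDist_comm (p' i), sqDist_comm (p i)]
  -- energy computations
  have hKill : ∀ (i : Fin n) (u : Fin r → ℝ),
      ∑ j, ω i j * (u ⬝ᵥ (Φ *ᵥ (p i - p j))) = 0 := by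
    intro i u
    have hterm : ∀ j, ω i j * (u ⬝ᵥ (Φ *ᵥ (p i - p j)))
        = ((dotL u).comp Φ.mulVecLin) (ω i j • (p i - p j)) := by
      intro j
      simp [Matrix.mulVec_smul, dotProduct_smul]
    rw [Finset.sum_congr rfl fun j _ => hterm j, ← map_sum, heq i, map_zero]
  have hKill' : ∀ (i : Fin n) (u : Fin r → ℝ),
      ∑ j, ω i j * ((p i - p j) ⬝ᵥ (Φ *ᵥ u)) = 0 := by
    intro i u
    have hterm : ∀ j, ω i j * ((p i - p j) ⬝ᵥ (Φ *ᵥ u))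
        = (dotL (Φ *ᵥ u)) (ω i j • (p i - p j)) := by
      intro j
      rw [dotL_apply, dotProduct_smul, smul_eq_mul, dotProduct_comm]
    rw [Finset.sum_congr rfl fun j _ => hterm j, ← map_sum, heq i, map_zero]
  have hsum0 : ∑ i, ∑ j, ω i j * Δ i j = 0 := by
    have hsplit : ∀ i j, ω i j * Δ i j
        = ω i j * (p i ⬝ᵥ (Φ *ᵥ (p i - p j)))
          - ω i j * (p j ⬝ᵥ (Φ *ᵥ (p i - p j))) := by
      intro i j
      rw [hΔform i j, ← mul_sub, ← sub_dotProduct]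
    rw [Finset.sum_congr rfl fun i _ =>
      Finset.sum_congr rfl fun j _ => hsplit i j]
    rw [Finset.sum_congr rfl fun i (_ : i ∈ Finset.univ) => Finset.sum_sub_distrib _ _,
      Finset.sum_sub_distrib]
    have h1 : ∑ i, ∑ j, ω i j * (p i ⬝ᵥ (Φ *ᵥ (p i - p j))) = 0 :=
      Finset.sum_eq_zero fun i _ => hKill i (p i)
    have h2 : ∑ i, ∑ j, ω i j * (p j ⬝ᵥ (Φ *ᵥ (p i - p j))) = 0 := by
      rw [Finset.sum_comm]
      apply Finset.sum_eq_zero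
      intro j _
      have : ∀ i, ω i j * (p j ⬝ᵥ (Φ *ᵥ (p i - p j)))
          = -(ω j i * (p j ⬝ᵥ (Φ *ᵥ (p j - p i)))) := by
        intro i
        rw [hsymω i j, show p i - p j = -(p j - p i) by abel, Matrix.mulVec_neg,
          dotProduct_neg, mul_neg]
      rw [Finset.sum_congr rfl fun i _ => this i, Finset.sum_neg_distrib,
        hKill j (p j), neg_zero]
    rw [h1, h2, sub_zero]
  have hterm_nonpos : ∀ i j, ω i j * Δ i j ≤ 0 := by
    intro i j
    by_cases hB' : (i, j) ∈ B
    · have : Δ i j = 0 := sub_eq_zero.2 (hbar (i, j) hB')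
      rw [this, mul_zero]
    · by_cases hC' : (i, j) ∈ C
      · have h1 : 0 ≤ ω i j := hproper.1 (i, j) hC'
        have h2 : Δ i j ≤ 0 := sub_nonpos.2 (hcab (i, j) hC')
        have := mul_nonneg h1 (neg_nonneg.2 h2)
        linarith
      · by_cases hS' : (i, j) ∈ S
        · have h1 : ω i j ≤ 0 := hproper.2 (i, j) hS'
          have h2 : 0 ≤ Δ i j := sub_nonneg.2 (hstru (i, j) hS')
          have := mul_nonneg (neg_nonneg.2 h1) h2
          linarith
        · have : ω i j = 0 := by
            apply hω0
            intro hmem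
            rcases hmem with (h' | h') | h' <;> tauto
          rw [this, zero_mul]
  have hzero : ∀ i j, ω i j * Δ i j = 0 := by
    have houter := (Finset.sum_eq_zero_iff_of_nonpos
      (fun i (_ : i ∈ Finset.univ) =>
        Finset.sum_nonpos fun j (_ : j ∈ Finset.univ) => hterm_nonpos i j)).1 hsum0
    intro i j
    exact (Finset.sum_eq_zero_iff_of_nonpos
      (fun j (_ : j ∈ Finset.univ) => hterm_nonpos i j)).1
      (houter i (Finset.mem_univ i)) j (Finset.mem_univ j)
  have hΔedge : ∀ i j, ω i j ≠ 0 → Δ i j = 0 := by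
    intro i j hne
    rcases mul_eq_zero.1 (hzero i j) with h' | h'
    · exact absurd h' hne
    · exact h'
  set supp : Fin n → Fin n → Prop := fun i j =>
    (i, j) ∉ B ∪ C ∪ S ∨ ((i, j) ∈ C ∧ ω i j = 0) ∨ ((i, j) ∈ S ∧ ω i j = 0)
    with hsuppdef
  set y : Fin n → Fin n → ℝ :=
    fun i j => if i < j ∧ supp i j then (-(1 : ℝ) / 2) * Δ i j else 0 with hydef
  have hΔB : ∀ i j, (i, j) ∈ B → Δ i j = 0 :=
    fun i j h' => sub_eq_zero.2 (hbar (i, j) h')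
  have hnots : ∀ i j, ¬ supp i j → Δ i j = 0 := by
    intro i j hns
    rw [hsuppdef] at hns
    simp only [not_or, not_not, not_and] at hns
    obtain ⟨h1, h2, h3⟩ := hns
    rcases h1 with (hB' | hC') | hS'
    · exact hΔB i j hB'
    · exact hΔedge i j (h2 hC')
    · exact hΔedge i j (h3 hS')
  have hΔdiag : ∀ i, Δ i i = 0 := by
    intro i
    rw [hΔdef]
    simp [sqDist]
  have hyE : ∀ i j, EscrY y i j = (-(1 : ℝ) / 2) * Δ i j := by
    intro i j
    rw [EscrY_apply]
    rcases lt_trichotomy i j with h' | h' | h'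
    · have hji : ¬ (j < i ∧ supp j i) := fun hc => absurd hc.1 (asymm h')
      rw [hydef]
      simp only
      rw [if_neg hji, add_zero]
      by_cases hs : supp i j
      · rw [if_pos ⟨h', hs⟩]
      · rw [if_neg (fun hc => hs hc.2), hnots i j hs, mul_zero]
    · subst h'
      rw [hydef]
      simp only
      rw [if_neg (fun hc => lt_irrefl i hc.1), hΔdiag i, mul_zero, add_zero]
    · have hij : ¬ (i < j ∧ supp i j) := fun hc => absurd hc.1 (asymm h')
      rw [hydef]
      simp only
      rw [if_neg hij, zero_add]
      by_cases hs : supp j i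
      · rw [if_pos ⟨h', hs⟩, hΔsymm i j]
      · rw [if_neg (fun hc => hs hc.2)]
        have hΔ0 : Δ i j = 0 := by rw [hΔsymm i j]; exact hnots j i hs
        rw [hΔ0, mul_zero]
  -- the vector of quadratic-form values and the kernel argument
  set v : Fin n → ℝ := fun a => p a ⬝ᵥ (Φ *ᵥ p a) with hvdef
  have hΩv : stressMatrix ω *ᵥ v = 0 := by
    funext i
    rw [stressMatrix_mulVec ω hωdiag v i]
    have key : ∀ j, ω i j * (v i - v j)
        = (ω i j * ((p i - p j) ⬝ᵥ (Φ *ᵥ p i))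
            + ω i j * (p i ⬝ᵥ (Φ *ᵥ (p i - p j))))
          - ω i j * ((p i - p j) ⬝ᵥ (Φ *ᵥ (p i - p j))) := by
      intro j
      rw [hvdef]
      simp only [Matrix.mulVec_sub, dotProduct_sub, sub_dotProduct]
      ring
    rw [Finset.sum_congr rfl fun j _ => key j, Finset.sum_sub_distrib,
      Finset.sum_add_distrib, hKill' i (p i), hKill i (p i)]
    have : ∑ j, ω i j * ((p i - p j) ⬝ᵥ (Φ *ᵥ (p i - p j))) = 0 := by
      apply Finset.sum_eq_zero
      intro j _
      rw [← hΔform i j]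
      exact hzero i j
    rw [this]
    simp
  -- the kernel of the stress matrix equals span(columns of P, e)
  set e1 : Fin n → ℝ := fun _ => 1 with he1def
  set L : ((Fin r → ℝ) × ℝ) →ₗ[ℝ] (Fin n → ℝ) :=
    { toFun := fun ct => Matrix.of p *ᵥ ct.1 + ct.2 • e1
      map_add' := fun x y => funext fun i => by
        show p i ⬝ᵥ (x.1 + y.1) + (x.2 + y.2) * 1
          = (p i ⬝ᵥ x.1 + x.2 * 1) + (p i ⬝ᵥ y.1 + y.2 * 1)
        rw [dotProduct_add]
        ring
      map_smul' := fun a x => funext fun i => by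
        show p i ⬝ᵥ (a • x.1) + (a * x.2) * 1 = a * (p i ⬝ᵥ x.1 + x.2 * 1)
        rw [dotProduct_smul]
        simp only [smul_eq_mul]
        ring } with hLdef
  have hPsum : ∀ c : Fin r → ℝ, ∑ k, (Matrix.of p *ᵥ c) k = 0 := by
    intro c
    simp only [Matrix.mulVec, dotProduct, Matrix.of_apply]
    rw [Finset.sum_comm]
    apply Finset.sum_eq_zero
    intro l _
    rw [← Finset.sum_mul, hcentroid l, zero_mul]
  have hLinj : Function.Injective L := by
    rw [← LinearMap.ker_eq_bot, LinearMap.ker_eq_bot']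
    rintro ⟨c, t⟩ hct
    have hct' : Matrix.of p *ᵥ c + t • e1 = 0 := hct
    have hptw : ∀ k, (Matrix.of p *ᵥ c) k + t = 0 := by
      intro k
      have h' := congrFun hct' k
      simpa [he1def] using h'
    have hsum : ∑ k, ((Matrix.of p *ᵥ c) k + t) = 0 := by
      rw [Finset.sum_congr rfl fun k _ => hptw k]
      simp
    rw [Finset.sum_add_distrib, hPsum c, Finset.sum_const, zero_add] at hsum
    have ht : t = 0 := by
      rw [Finset.card_univ, Fintype.card_fin, nsmul_eq_mul] at hsum
      have hn' : (n : ℝ) ≠ 0 := Nat.cast_ne_zero.2 hn.ne'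
      exact (mul_eq_zero.1 hsum).resolve_left hn'
    subst ht
    have hc0 : Matrix.of p *ᵥ c = 0 := by
      simpa using hct'
    have : c = 0 := by
      apply span_fact p hdim
      intro i
      exact congrFun hc0 i
    simp [this]
  have hrange_le : LinearMap.range L ≤ LinearMap.ker (stressMatrix ω).mulVecLin := by
    rintro _ ⟨⟨c, t⟩, rfl⟩
    simp only [LinearMap.mem_ker, Matrix.mulVecLin_apply]
    show stressMatrix ω *ᵥ (Matrix.of p *ᵥ c + t • e1) = 0
    rw [Matrix.mulVec_add, Matrix.mulVec_smul]
    have h1 : stressMatrix ω *ᵥ (Matrix.of p *ᵥ c) = 0 := by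
      funext i
      rw [stressMatrix_mulVec ω hωdiag _ i]
      have : ∀ j, ω i j * ((Matrix.of p *ᵥ c) i - (Matrix.of p *ᵥ c) j)
          = (dotL c) (ω i j • (p i - p j)) := by
        intro j
        rw [dotL_apply, dotProduct_smul, smul_eq_mul, dotProduct_comm]
        congr 1
        show (p i ⬝ᵥ c) - (p j ⬝ᵥ c) = (p i - p j) ⬝ᵥ c
        rw [sub_dotProduct]
      rw [Finset.sum_congr rfl fun j _ => this j, ← map_sum, heq i, map_zero]
      rfl
    have h2 : stressMatrix ω *ᵥ e1 = 0 := by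
      funext i
      rw [stressMatrix_mulVec ω hωdiag e1 i]
      simp [he1def]
    rw [h1, h2, smul_zero, add_zero]
  have hfr_range : Module.finrank ℝ (LinearMap.range L) = r + 1 := by
    rw [LinearMap.finrank_range_of_inj hLinj]
    simp [Module.finrank_prod, Module.finrank_pi]
  have hle : r + 1 ≤ n := by
    have h' := Submodule.finrank_le (LinearMap.range L)
    rw [hfr_range, Module.finrank_pi, Fintype.card_fin] at h'
    exact h'
  have hfr_ker : Module.finrank ℝ (LinearMap.ker (stressMatrix ω).mulVecLin) = r + 1 := by
    have h2 := LinearMap.finrank_range_add_finrank_ker (stressMatrix ω).mulVecLin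
    rw [Module.finrank_pi, Fintype.card_fin] at h2
    have h3 : Module.finrank ℝ (LinearMap.range (stressMatrix ω).mulVecLin)
        = n - r - 1 := hrank
    omega
  have hker_eq : LinearMap.range L = LinearMap.ker (stressMatrix ω).mulVecLin :=
    Submodule.eq_of_le_of_finrank_le hrange_le (by rw [hfr_ker, hfr_range])
  have hvmem : v ∈ LinearMap.range L := by
    rw [hker_eq, LinearMap.mem_ker, Matrix.mulVecLin_apply]
    exact hΩv
  obtain ⟨⟨c, t⟩, hct⟩ := hvmem
  have hvz : ∀ k, ∑ j, v j * Z j k = 0 := by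
    intro k
    have hPz : ∀ l, ∑ j, p j l * Z j k = 0 := by
      intro l
      have := congrFun (hZ.1 k) l
      simpa [Matrix.mulVec, dotProduct, Matrix.transpose_apply] using this
    have hez : ∑ j, Z j k = 0 := hZ.2.1 k
    have hvj : ∀ j, v j = (Matrix.of p *ᵥ c) j + t := by
      intro j
      have h' := congrFun hct j
      rw [hLdef] at h'
      simp only [LinearMap.coe_mk, AddHom.coe_mk, Pi.add_apply, Pi.smul_apply,
        he1def, smul_eq_mul, mul_one] at h'
      exact h'.symm
    rw [Finset.sum_congr rfl fun j _ => by rw [hvj j]]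
    have expand : ∀ j, ((Matrix.of p *ᵥ c) j + t) * Z j k
        = (∑ l, p j l * c l * Z j k) + t * Z j k := by
      intro j
      simp only [Matrix.mulVec, dotProduct, Matrix.of_apply, add_mul, Finset.sum_mul]
    rw [Finset.sum_congr rfl fun j _ => expand j, Finset.sum_add_distrib,
      ← Finset.mul_sum, hez, mul_zero, add_zero, Finset.sum_comm]
    apply Finset.sum_eq_zero
    intro l _
    have : ∀ j, p j l * c l * Z j k = c l * (p j l * Z j k) := fun j => by ring
    rw [Finset.sum_congr rfl fun j _ => this j, ← Finset.mul_sum, hPz l, mul_zero]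
  have hEZ : EscrY y * Z = 0 := by
    ext i k
    rw [Matrix.mul_apply]
    have h0 : ∀ j, EscrY y i j * Z j k = (-(1 : ℝ) / 2) * (Δ i j * Z j k) := by
      intro j
      rw [hyE i j]
      ring
    rw [Finset.sum_congr rfl fun j _ => h0 j, ← Finset.mul_sum]
    have hsplit : ∀ j, Δ i j * Z j k
        = (v i * Z j k + v j * Z j k)
          - ((p i ⬝ᵥ (Φ *ᵥ p j)) * Z j k + (p j ⬝ᵥ (Φ *ᵥ p i)) * Z j k) := by
      intro j
      rw [hΔform i j, quad_expand, hvdef]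
      ring
    rw [Finset.sum_congr rfl fun j _ => hsplit j, Finset.sum_sub_distrib,
      Finset.sum_add_distrib, Finset.sum_add_distrib]
    have hez : ∑ j, Z j k = 0 := hZ.2.1 k
    have hPz : ∀ l, ∑ j, p j l * Z j k = 0 := by
      intro l
      have := congrFun (hZ.1 k) l
      simpa [Matrix.mulVec, dotProduct, Matrix.transpose_apply] using this
    have hzp : (fun l => ∑ j, Z j k • p j l) = (0 : Fin r → ℝ) := by
      funext l
      simp only [Pi.zero_apply]
      rw [show (∑ j, Z j k • p j l) = ∑ j, p j l * Z j k from
        Finset.sum_congr rfl fun j _ => by simp [mul_comm], hPz l]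
    have hzsum : ∑ j, Z j k • p j = (0 : Fin r → ℝ) := by
      funext l
      have : (∑ j, Z j k • p j) l = ∑ j, Z j k • p j l := by
        simp [Finset.sum_apply]
      rw [this]
      exact congrFun hzp l
    have t1 : ∑ j, v i * Z j k = 0 := by rw [← Finset.mul_sum, hez, mul_zero]
    have t2 : ∑ j, v j * Z j k = 0 := hvz k
    have t3 : ∑ j, (p i ⬝ᵥ (Φ *ᵥ p j)) * Z j k = 0 := by
      have : ∀ j, (p i ⬝ᵥ (Φ *ᵥ p j)) * Z j k
          = ((dotL (p i)).comp Φ.mulVecLin) (Z j k • p j) := by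
        intro j
        simp [Matrix.mulVec_smul, dotProduct_smul, mul_comm]
      rw [Finset.sum_congr rfl fun j _ => this j, ← map_sum, hzsum, map_zero]
    have t4 : ∑ j, (p j ⬝ᵥ (Φ *ᵥ p i)) * Z j k = 0 := by
      have : ∀ j, (p j ⬝ᵥ (Φ *ᵥ p i)) * Z j k = (dotL (Φ *ᵥ p i)) (Z j k • p j) := by
        intro j
        rw [dotL_apply, dotProduct_smul, smul_eq_mul, dotProduct_comm, mul_comm]
      rw [Finset.sum_congr rfl fun j _ => this j, ← map_sum, hzsum, map_zero]
    rw [t1, t2, t3, t4]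
    simp
  -- construct the witness and its properties
  have hCdom : ∀ i j, (i, j) ∈ C → Δ i j ≤ 0 :=
    fun i j h' => sub_nonpos.2 (hcab (i, j) h')
  have hSdom : ∀ i j, (i, j) ∈ S → 0 ≤ Δ i j :=
    fun i j h' => sub_nonneg.2 (hstru (i, j) h')
  have hyne : y ≠ 0 := by
    rw [FrameworkCongruent, not_forall] at hnc
    obtain ⟨i, hi⟩ := hnc
    rw [not_forall] at hi
    obtain ⟨j, hij⟩ := hi
    have hΔne : Δ i j ≠ 0 := sub_ne_zero.2 hij
    have hij' : i ≠ j := by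
      rintro rfl
      exact hΔne (hΔdiag i)
    obtain ⟨a, b', hab, hΔab⟩ : ∃ a b', a < b' ∧ Δ a b' ≠ 0 := by
      rcases lt_or_gt_of_ne hij' with h' | h'
      · exact ⟨i, j, h', hΔne⟩
      · exact ⟨j, i, h', fun hc => hΔne (by rw [hΔsymm i j, hc])⟩
    have hsab : supp a b' := by
      by_contra hs
      exact hΔab (hnots a b' hs)
    intro h0
    have hy0 : y a b' = 0 := by rw [h0]; rfl
    rw [hydef] at hy0
    simp only at hy0
    rw [if_pos (show a < b' ∧ supp a b' from ⟨hab, hsab⟩)] at hy0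
    apply hΔab
    rcases mul_eq_zero.1 hy0 with h' | h'
    · norm_num at h'
    · exact h'
  refine ⟨y, hyne, ?_, ?_, ?_, hEZ⟩
  · intro i j hynz
    by_cases hc : i < j ∧ supp i j
    · exact ⟨hc.1, hc.2⟩
    · exfalso
      apply hynz
      rw [hydef]
      simp only [if_neg hc]
  · intro i j hC' hω'
    rw [hydef]
    simp only
    by_cases hc : i < j ∧ supp i j
    · rw [if_pos hc]
      have h2 : (1 : ℝ) / 2 * Δ i j ≤ 0 :=
        mul_nonpos_iff.2 (Or.inl ⟨by norm_num, hCdom i j hC'⟩)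
      have h3 : (-1 : ℝ) / 2 * Δ i j = -((1 : ℝ) / 2 * Δ i j) := by ring
      rw [h3]
      exact neg_nonneg.2 h2
    · rw [if_neg hc]
  · intro i j hS' hω'
    rw [hydef]
    simp only
    by_cases hc : i < j ∧ supp i j
    · rw [if_pos hc]
      exact mul_nonpos_iff.2 (Or.inr ⟨by norm_num, hSdom i j hS'⟩)
    · rw [if_neg hc]

lemma quad_bound {r : ℕ} (Φ : Matrix (Fin r) (Fin r) ℝ) (x : Fin r → ℝ) :
    |x ⬝ᵥ (Φ *ᵥ x)| ≤ (∑ k, ∑ l, |Φ k l|) * (x ⬝ᵥ x) := by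
  have hxx : ∀ k l, |x k * x l| ≤ x ⬝ᵥ x := by
    intro k l
    have h1 : 2 * |x k| * |x l| ≤ |x k| ^ 2 + |x l| ^ 2 := two_mul_le_add_sq _ _
    have h2 : |x k| ^ 2 = x k * x k := by rw [sq_abs]; ring
    have h3 : |x l| ^ 2 = x l * x l := by rw [sq_abs]; ring
    have h4 : ∀ m, x m * x m ≤ x ⬝ᵥ x := by
      intro m
      rw [dotProduct]
      exact Finset.single_le_sum (f := fun i => x i * x i)
        (fun i _ => mul_self_nonneg (x i)) (Finset.mem_univ m)
    rw [abs_mul]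
    nlinarith [h4 k, h4 l, abs_nonneg (x k), abs_nonneg (x l)]
  have hexp : x ⬝ᵥ (Φ *ᵥ x) = ∑ k, ∑ l, x k * (Φ k l * x l) := by
    simp only [dotProduct, Matrix.mulVec, Finset.mul_sum]
  rw [hexp, Finset.sum_mul]
  calc |∑ k, ∑ l, x k * (Φ k l * x l)| ≤ ∑ k, |∑ l, x k * (Φ k l * x l)| :=
        Finset.abs_sum_le_sum_abs _ _
    _ ≤ ∑ k, ∑ l, |x k * (Φ k l * x l)| :=
        Finset.sum_le_sum fun k _ => Finset.abs_sum_le_sum_abs _ _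
    _ ≤ ∑ k, ∑ l, |Φ k l| * (x ⬝ᵥ x) := by
        apply Finset.sum_le_sum
        intro k _
        apply Finset.sum_le_sum
        intro l _
        have : |x k * (Φ k l * x l)| = |Φ k l| * |x k * x l| := by
          rw [abs_mul, abs_mul, abs_mul]
          ring
        rw [this]
        exact mul_le_mul_of_nonneg_left (hxx k l) (abs_nonneg _)
    _ = ∑ k, (∑ l, |Φ k l|) * (x ⬝ᵥ x) := by
        exact Finset.sum_congr rfl fun k _ => (Finset.sum_mul _ _ _).symm

open scoped MatrixOrder in
set_option maxHeartbeats 1000000 in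
theorem bwd {n r : ℕ}
    (B C S : Set (Fin n × Fin n)) (hG : TensegrityGraph B C S)
    (p : Fin n → Fin r → ℝ)
    (hdim : affineSpan ℝ (Set.range p) = ⊤)
    (hcentroid : ∀ k, ∑ i, p i k = 0)
    (ω : Fin n → Fin n → ℝ)
    (Z : Matrix (Fin n) (Fin (n - r - 1)) ℝ)
    (hZ : IsGaleMatrix (Matrix.of p) Z)
    (y : Fin n → Fin n → ℝ) (hyne : y ≠ 0)
    (hsupp : ∀ i j, y i j ≠ 0 → i < j ∧ ((i, j) ∉ B ∪ C ∪ S ∨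
      ((i, j) ∈ C ∧ ω i j = 0) ∨ ((i, j) ∈ S ∧ ω i j = 0)))
    (hyC : ∀ i j, (i, j) ∈ C → ω i j = 0 → 0 ≤ y i j)
    (hyS : ∀ i j, (i, j) ∈ S → ω i j = 0 → y i j ≤ 0)
    (hEZ : EscrY y * Z = 0) :
    ∃ p' : Fin n → Fin r → ℝ, AffinelyDominated B C S p p' ∧ ¬ FrameworkCongruent p p' := by
  classical
  obtain ⟨symB, symC, symS, hloop, hBC, hBS, hCS, hconn⟩ := hG
  have hEsym : ∀ i j, EscrY y i j = EscrY y j i := by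
    intro i j
    rw [EscrY_apply, EscrY_apply, add_comm]
  have hEsymT : (EscrY y)ᵀ = EscrY y := by
    ext i j
    rw [Matrix.transpose_apply, hEsym]
  have hydiag : ∀ i, y i i = 0 := by
    intro i
    by_contra h'
    exact lt_irrefl i (hsupp i i h').1
  have hEdiag : ∀ i, EscrY y i i = 0 := by
    intro i
    rw [EscrY_apply, hydiag, add_zero]
  -- `ℰ v = 0` whenever `v` is in the null space of `(Pᵀ; eᵀ)`
  have hEv : ∀ v : Fin n → ℝ, (Matrix.of p)ᵀ *ᵥ v = 0 → ∑ i, v i = 0 →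
      EscrY y *ᵥ v = 0 := by
    intro v hv1 hv2
    have hvmem := hZ.2.2.2 v hv1 hv2
    have hker : Submodule.span ℝ (Set.range fun k (i : Fin n) => Z i k)
        ≤ LinearMap.ker (EscrY y).mulVecLin := by
      rw [Submodule.span_le]
      rintro _ ⟨k, rfl⟩
      simp only [SetLike.mem_coe, LinearMap.mem_ker, Matrix.mulVecLin_apply]
      funext i
      have h1 : (EscrY y *ᵥ fun i' => Z i' k) i = ∑ j, EscrY y i j * Z j k := rfl
      rw [h1, ← Matrix.mul_apply, hEZ]
      rfl
    have h2 := hker hvmem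
    simp only [LinearMap.mem_ker, Matrix.mulVecLin_apply] at h2
    exact h2
  -- columns of ℰ lie in the span of the columns of P and e
  have hrep : ∀ j, ∃ ct : (Fin r → ℝ) × ℝ, ∀ i,
      EscrY y i j = (Matrix.of p *ᵥ ct.1) i + ct.2 := by
    intro j
    obtain ⟨c, t, hct⟩ := dual_lemma p (fun i => EscrY y i j) (by
      intro v hv1 hv2
      have hEv0 := hEv v hv1 hv2
      have h3 : (fun i => EscrY y i j) ⬝ᵥ v = ∑ i, EscrY y j i * v i := by
        rw [dotProduct]
        exact Finset.sum_congr rfl fun i _ => by rw [hEsym i j]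
      rw [h3]
      have h4 : ∑ i, EscrY y j i * v i = (EscrY y *ᵥ v) j := rfl
      rw [h4, hEv0]
      rfl)
    exact ⟨(c, t), hct⟩
  choose ct hct using hrep
  set G : Matrix (Fin r) (Fin n) ℝ := Matrix.of (fun l j => (ct j).1 l) with hGdef
  set tv : Fin n → ℝ := fun j => (ct j).2 with htvdef
  have hEmat : EscrY y = Matrix.of p * G + Matrix.vecMulVec (fun _ => 1) tv := by
    ext i j
    rw [Matrix.add_apply, Matrix.mul_apply, Matrix.vecMulVec_apply, hct j i]
    simp [Matrix.mulVec, dotProduct, hGdef, htvdef]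
  -- the Gram matrix of the configuration and its inverse
  set Q : Matrix (Fin r) (Fin r) ℝ := (Matrix.of p)ᵀ * Matrix.of p with hQdef
  have hQsymT : Qᵀ = Q := by
    rw [hQdef, Matrix.transpose_mul, Matrix.transpose_transpose]
  have hQquad : ∀ x : Fin r → ℝ, x ⬝ᵥ (Q *ᵥ x)
      = (Matrix.of p *ᵥ x) ⬝ᵥ (Matrix.of p *ᵥ x) := by
    intro x
    rw [hQdef, ← Matrix.mulVec_mulVec, dotProduct_mulVec, Matrix.vecMul_transpose]
  have hQpd : Q.PosDef := by
    rw [Matrix.posDef_iff_dotProduct_mulVec]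
    constructor
    · show Qᴴ = Q
      rw [Matrix.conjTranspose_eq_transpose_of_trivial, hQsymT]
    · intro x hx
      have hsx : star x = x := funext fun i => star_trivial (x i)
      rw [hsx, hQquad]
      have h1 : 0 ≤ (Matrix.of p *ᵥ x) ⬝ᵥ (Matrix.of p *ᵥ x) := by
        rw [dotProduct]
        exact Finset.sum_nonneg fun i _ => mul_self_nonneg _
      rcases h1.lt_or_eq with h' | h'
      · exact h'
      · exfalso
        apply hx
        apply span_fact p hdim
        intro i
        have h2 : Matrix.of p *ᵥ x = 0 := dotProduct_self_eq_zero.1 h'.symm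
        exact congrFun h2 i
  have hdet : IsUnit Q.det := isUnit_iff_ne_zero.2 (ne_of_gt hQpd.det_pos)
  have hQN : Q * Q⁻¹ = 1 := Matrix.mul_nonsing_inv Q hdet
  have hNQ : Q⁻¹ * Q = 1 := Matrix.nonsing_inv_mul Q hdet
  have hNsym : Q⁻¹ᵀ = Q⁻¹ := by rw [Matrix.transpose_nonsing_inv, hQsymT]
  set J : Matrix (Fin n) (Fin n) ℝ := Matrix.of p * Q⁻¹ * (Matrix.of p)ᵀ with hJdef
  have hJP : J * Matrix.of p = Matrix.of p := by
    rw [hJdef]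
    simp only [Matrix.mul_assoc]
    rw [← hQdef, hNQ, Matrix.mul_one]
  have hJT : Jᵀ = J := by
    rw [hJdef]
    simp only [Matrix.transpose_mul, Matrix.transpose_transpose, hNsym,
      Matrix.mul_assoc]
  have hPt1 : (Matrix.of p)ᵀ *ᵥ (fun _ => (1 : ℝ)) = 0 := by
    funext l
    simp only [Matrix.mulVec, dotProduct, Matrix.transpose_apply, Matrix.of_apply,
      mul_one]
    exact hcentroid l
  have hJ1 : J *ᵥ (fun _ => (1 : ℝ)) = 0 := by
    rw [hJdef, ← Matrix.mulVec_mulVec, hPt1, Matrix.mulVec_zero]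
  have hJE : J * EscrY y = EscrY y - Matrix.vecMulVec (fun _ => 1) tv := by
    rw [hEmat, Matrix.mul_add, ← Matrix.mul_assoc, hJP, mul_vmv, hJ1]
    have h0 : Matrix.vecMulVec (0 : Fin n → ℝ) tv = 0 := by
      ext a b'
      simp [Matrix.vecMulVec_apply]
    rw [h0, add_zero, add_sub_cancel_right]
  have hEJ : EscrY y * J = EscrY y - Matrix.vecMulVec tv (fun _ => 1) := by
    have h1 := congrArg Matrix.transpose hJE
    rw [Matrix.transpose_mul, hEsymT, hJT, Matrix.transpose_sub, hEsymT,
      vmv_transpose] at h1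
    exact h1
  set Φ : Matrix (Fin r) (Fin r) ℝ :=
    Q⁻¹ * (Matrix.of p)ᵀ * EscrY y * Matrix.of p * Q⁻¹ with hΦdef
  have hΦsym : Φᵀ = Φ := by
    rw [hΦdef]
    simp only [Matrix.transpose_mul, Matrix.transpose_transpose, hNsym, hEsymT,
      Matrix.mul_assoc]
  have hMeq : Matrix.of p * Φ * (Matrix.of p)ᵀ
      = EscrY y - Matrix.vecMulVec tv (fun _ => 1)
        - Matrix.vecMulVec (fun _ => 1) (tv ᵥ* J) := by
    have h1 : Matrix.of p * Φ * (Matrix.of p)ᵀ = J * EscrY y * J := by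
      rw [hΦdef, hJdef]
      simp only [Matrix.mul_assoc]
    rw [h1, hJE, Matrix.sub_mul, hEJ, vmv_mul]
  have hMent : ∀ a b', p a ⬝ᵥ (Φ *ᵥ p b')
      = EscrY y a b' - tv a - (tv ᵥ* J) b' := by
    intro a b'
    rw [← Mentry p Φ a b', hMeq]
    simp [Matrix.sub_apply, Matrix.vecMulVec_apply]
  have hΔE : ∀ i j, (p i - p j) ⬝ᵥ (Φ *ᵥ (p i - p j)) = -2 * EscrY y i j := by
    intro i j
    rw [quad_expand, hMent i i, hMent j j, hMent i j, hMent j i, hEdiag i,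
      hEdiag j, hEsym j i]
    ring
  -- a small positive multiple of Φ perturbs the identity to a PSD matrix
  obtain ⟨t₀, ht₀pos, ht₀c⟩ : ∃ t₀ : ℝ, 0 < t₀ ∧ t₀ * (∑ k, ∑ l, |Φ k l|) ≤ 1 / 2 := by
    set c0 : ℝ := ∑ k, ∑ l, |Φ k l| with hc0def
    have hc0 : 0 ≤ c0 :=
      Finset.sum_nonneg fun k _ => Finset.sum_nonneg fun l _ => abs_nonneg _
    refine ⟨1 / (2 * (c0 + 1)), by positivity, ?_⟩
    rw [div_mul_eq_mul_div, one_mul, div_le_div_iff₀ (by positivity) (by norm_num)]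
    nlinarith
  have hpsd : ((1 : Matrix (Fin r) (Fin r) ℝ) + t₀ • Φ).PosSemidef := by
    rw [Matrix.posSemidef_iff_dotProduct_mulVec]
    constructor
    · show ((1 : Matrix (Fin r) (Fin r) ℝ) + t₀ • Φ)ᴴ = _
      rw [Matrix.conjTranspose_eq_transpose_of_trivial, Matrix.transpose_add,
        Matrix.transpose_one, Matrix.transpose_smul, hΦsym]
    · intro x
      have hsx : star x = x := funext fun i => star_trivial (x i)
      rw [hsx, Matrix.add_mulVec, Matrix.one_mulVec, Matrix.smul_mulVec,
        dotProduct_add, dotProduct_smul, smul_eq_mul]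
      have h1 := quad_bound Φ x
      have h2 : 0 ≤ x ⬝ᵥ x := by
        rw [dotProduct]
        exact Finset.sum_nonneg fun i _ => mul_self_nonneg _
      have h3 := abs_le.1 h1
      have h4 : t₀ * (x ⬝ᵥ (Φ *ᵥ x)) ≥ -(t₀ * ((∑ k, ∑ l, |Φ k l|) * (x ⬝ᵥ x))) := by
        have := mul_le_mul_of_nonneg_left h3.1 ht₀pos.le
        nlinarith
      have h5 : t₀ * ((∑ k, ∑ l, |Φ k l|) * (x ⬝ᵥ x)) ≤ 1 / 2 * (x ⬝ᵥ x) := by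
        rw [← mul_assoc]
        exact mul_le_mul_of_nonneg_right ht₀c h2
      nlinarith
  set A : Matrix (Fin r) (Fin r) ℝ := CFC.sqrt ((1 : Matrix (Fin r) (Fin r) ℝ) + t₀ • Φ) with hAdef
  have hAA : A * A = (1 : Matrix (Fin r) (Fin r) ℝ) + t₀ • Φ := CFC.sqrt_mul_sqrt_self _ (Matrix.nonneg_iff_posSemidef.2 hpsd)
  have hAt : Aᵀ = A := by
    rw [← Matrix.conjTranspose_eq_transpose_of_trivial]
    exact (Matrix.nonneg_iff_posSemidef.1 (CFC.sqrt_nonneg _)).1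
  set p' : Fin n → Fin r → ℝ := fun i => A *ᵥ p i with hp'def
  have hsq : ∀ i j, sqDist (p' i) (p' j)
      = sqDist (p i) (p j) + t₀ * (-2 * EscrY y i j) := by
    intro i j
    have hd : p' i - p' j = A *ᵥ (p i - p j) := by
      rw [hp'def]
      simp only [Matrix.mulVec_sub]
    have key : (A *ᵥ (p i - p j)) ⬝ᵥ (A *ᵥ (p i - p j))
        = (p i - p j) ⬝ᵥ ((Aᵀ * A) *ᵥ (p i - p j)) := by
      rw [dotProduct_mulVec, ← Matrix.mulVec_transpose, Matrix.mulVec_mulVec,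
        dotProduct_comm]
    rw [sqDist_eq_dot, sqDist_eq_dot, hd, key, hAt, hAA, Matrix.add_mulVec,
      Matrix.one_mulVec, Matrix.smul_mulVec, dotProduct_add,
      dotProduct_smul, smul_eq_mul, hΔE i j]
  -- sign information about ℰ on the edges
  have hyB0 : ∀ i j, (i, j) ∈ B → y i j = 0 := by
    intro i j hB'
    by_contra h'
    rcases (hsupp i j h').2 with hne | ⟨hC', _⟩ | ⟨hS', _⟩
    · exact hne (Or.inl (Or.inl hB'))
    · have : (i, j) ∈ B ∩ C := ⟨hB', hC'⟩
      rw [hBC] at this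
      exact this
    · have : (i, j) ∈ B ∩ S := ⟨hB', hS'⟩
      rw [hBS] at this
      exact this
  have hEB : ∀ i j, (i, j) ∈ B → EscrY y i j = 0 := by
    intro i j hB'
    rw [EscrY_apply, hyB0 i j hB', hyB0 j i (symB i j hB'), add_zero]
  have hyCn : ∀ i j, (i, j) ∈ C → 0 ≤ y i j := by
    intro i j hC'
    by_cases h' : y i j = 0
    · rw [h']
    · rcases (hsupp i j h').2 with hne | ⟨_, hω'⟩ | ⟨hS', _⟩
      · exact absurd (Or.inl (Or.inr hC')) hne
      · exact hyC i j hC' hω'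
      · have : (i, j) ∈ C ∩ S := ⟨hC', hS'⟩
        rw [hCS] at this
        exact this.elim
  have hEC : ∀ i j, (i, j) ∈ C → 0 ≤ EscrY y i j := by
    intro i j hC'
    rw [EscrY_apply]
    exact add_nonneg (hyCn i j hC') (hyCn j i (symC i j hC'))
  have hySn : ∀ i j, (i, j) ∈ S → y i j ≤ 0 := by
    intro i j hS'
    by_cases h' : y i j = 0
    · rw [h']
    · rcases (hsupp i j h').2 with hne | ⟨hC', _⟩ | ⟨_, hω'⟩
      · exact absurd (Or.inr hS') hne
      · have : (i, j) ∈ C ∩ S := ⟨hC', hS'⟩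
        rw [hCS] at this
        exact this.elim
      · exact hyS i j hS' hω'
  have hES : ∀ i j, (i, j) ∈ S → EscrY y i j ≤ 0 := by
    intro i j hS'
    rw [EscrY_apply]
    exact add_nonpos (hySn i j hS') (hySn j i (symS i j hS'))
  refine ⟨p', ⟨⟨?_, ?_, ?_⟩, A, 0, fun i => by simp [hp'def]⟩, ?_⟩
  · rintro ⟨i, j⟩ hB'
    rw [hsq i j, hEB i j hB']
    ring
  · rintro ⟨i, j⟩ hC'
    rw [hsq i j]
    have h1 : -2 * EscrY y i j ≤ 0 := by
      have := hEC i j hC'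
      nlinarith
    nlinarith [mul_nonpos_iff.2 (Or.inl ⟨ht₀pos.le, h1⟩)]
  · rintro ⟨i, j⟩ hS'
    rw [hsq i j]
    have h1 : 0 ≤ -2 * EscrY y i j := by
      have := hES i j hS'
      nlinarith
    nlinarith [mul_nonneg ht₀pos.le h1]
  · intro hcong
    obtain ⟨i, hi⟩ := Function.ne_iff.1 hyne
    obtain ⟨j, hij⟩ := Function.ne_iff.1 hi
    have hyij : y i j ≠ 0 := hij
    have hji0 : y j i = 0 := by
      by_contra h'
      exact lt_asymm (hsupp i j hyij).1 (hsupp j i h').1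
    have hEij : EscrY y i j ≠ 0 := by
      rw [EscrY_apply, hji0, add_zero]
      exact hyij
    have h1 := hcong i j
    rw [hsq i j] at h1
    have h2 : t₀ * (-2 * EscrY y i j) = 0 := by linarith
    rcases mul_eq_zero.1 h2 with h' | h'
    · exact ht₀pos.ne' h'
    · rcases mul_eq_zero.1 h' with h'' | h''
      · norm_num at h''
      · exact hEij h''

end Stmt18aux

/-- if moreover `rank Ω = n-r-1`, the Gale characterization of the
existence of a framework affinely-dominated by but not congruent to `(G,p)`
becomes `ℰ⁰(y) Z = 0`. -/
theorem statement18 {n r : ℕ}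
    (B C S : Set (Fin n × Fin n)) (hG : TensegrityGraph B C S)
    (p : Fin n → Fin r → ℝ)
    (hdim : affineSpan ℝ (Set.range p) = ⊤)
    (hcentroid : ∀ k, ∑ i, p i k = 0)
    (ω : Fin n → Fin n → ℝ)
    (hstress : IsStress (B ∪ C ∪ S) p ω)
    (hproper : IsProperStress C S ω)
    (hrank : (stressMatrix ω).rank = n - r - 1)
    (Z : Matrix (Fin n) (Fin (n - r - 1)) ℝ)
    (hZ : IsGaleMatrix (Matrix.of p) Z) :
    (∃ p' : Fin n → Fin r → ℝ,
        AffinelyDominated B C S p p' ∧ ¬ FrameworkCongruent p p') ↔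
      ∃ y : Fin n → Fin n → ℝ, y ≠ 0 ∧
        (∀ i j, y i j ≠ 0 → i < j ∧ ((i, j) ∉ B ∪ C ∪ S ∨
          ((i, j) ∈ C ∧ ω i j = 0) ∨ ((i, j) ∈ S ∧ ω i j = 0))) ∧
        (∀ i j, (i, j) ∈ C → ω i j = 0 → 0 ≤ y i j) ∧
        (∀ i j, (i, j) ∈ S → ω i j = 0 → y i j ≤ 0) ∧
        EscrY y * Z = 0 := by
  constructor
  · rintro ⟨p', hdom, hnc⟩
    exact Stmt18aux.fwd B C S hG p hdim hcentroid ω hstress hproper hrank Z hZ p' hdom hnc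
  · rintro ⟨y, hyne, hsupp, hyC, hyS, hEZ⟩
    exact Stmt18aux.bwd B C S hG p hdim hcentroid ω Z hZ y hyne hsupp hyC hyS hEZ
end
end
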